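/- arXiv:2010.07508 — 5 statements merged into one kernel-verified Lean document; each statement's English description precedes it below -/
import Mathlib

section
/- Under the setup with general d' ≥ 1: suppose for each ε ∈ (0,1] a C³ solution (r_ε, x_ε) of the XLMD system on [0,t_f] is given, satisfying the a priori bounds with constant C₀ (independent of ε) and the compatible initial condition with constant M. Then there exists a constant C > 0, depending only on A, b, F, r_⋆, t_f, C₀, M (and not on ε), such that for all ε ∈ (0,1] and all t ∈ [0,t_f]: |r_ε(t) − r_⋆(t)| ≤ C·ε^{1/2} and |ṙ_ε(t) − ṙ_⋆(t)| ≤ C·ε^{1/2}. -/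
/- XLMD error analysis, general latent dimension: O(√ε) error for the atomic
positions and momenta, under compatible initial conditions. -/

open scoped RealInnerProductSpace
open Set

noncomputable section

attribute [local instance] Matrix.normedAddCommGroup Matrix.normedSpace

/-- The gradient in `r` of `Q(r,x) = ½ xᵀA(r)x − b(r)ᵀx`; its `k`-th component is
`½ xᵀ(∂A/∂r_k)(r)x − (∂b/∂r_k)(r)ᵀx`. -/
noncomputable def gradQ {d n : ℕ}
    (A : EuclideanSpace ℝ (Fin d) → Matrix (Fin n) (Fin n) ℝ)
    (b : EuclideanSpace ℝ (Fin d) → EuclideanSpace ℝ (Fin n))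
    (r : EuclideanSpace ℝ (Fin d)) (x : EuclideanSpace ℝ (Fin n)) :
    EuclideanSpace ℝ (Fin d) :=
  (EuclideanSpace.equiv (Fin d) ℝ).symm fun k =>
    (1/2) * ⟪x, (Matrix.toEuclideanLin (fderiv ℝ A r (EuclideanSpace.single k 1))) x⟫
      - ⟪fderiv ℝ b r (EuclideanSpace.single k 1), x⟫

/-- Matrix to continuous linear map on Euclidean space, as a continuous linear map. -/
noncomputable def matCLM (n : ℕ) :
    Matrix (Fin n) (Fin n) ℝ →L[ℝ] (EuclideanSpace ℝ (Fin n) →L[ℝ] EuclideanSpace ℝ (Fin n)) :=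
  LinearMap.toContinuousLinearMap
    ((Matrix.toEuclideanLin.trans LinearMap.toContinuousLinearMap).toLinearMap)

lemma matCLM_apply {n : ℕ} (M : Matrix (Fin n) (Fin n) ℝ) (v : EuclideanSpace ℝ (Fin n)) :
    matCLM n M v = Matrix.toEuclideanLin M v := rfl

lemma matCLM_mul {n : ℕ} (M N : Matrix (Fin n) (Fin n) ℝ) :
    matCLM n (M * N) = matCLM n M * matCLM n N := by
  ext v
  simp [matCLM_apply, ContinuousLinearMap.mul_apply, Matrix.toEuclideanLin_apply,
    Matrix.mulVec_mulVec]

lemma matCLM_one {n : ℕ} : matCLM n (1 : Matrix (Fin n) (Fin n) ℝ) = 1 := by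
  ext v
  simp [matCLM_apply, Matrix.toEuclideanLin_apply]

lemma posDef_of_bound {n : ℕ} {M : Matrix (Fin n) (Fin n) ℝ} (hsymm : M.IsSymm) {c : ℝ}
    (hc : 0 < c)
    (h : ∀ v : EuclideanSpace ℝ (Fin n), c * ‖v‖ ^ 2 ≤ ⟪v, Matrix.toEuclideanLin M v⟫) :
    M.PosDef := by
  rw [Matrix.posDef_iff_dotProduct_mulVec]
  constructor
  · rwa [Matrix.IsHermitian, Matrix.conjTranspose_eq_transpose_of_trivial]
  · intro x hx
    set v : EuclideanSpace ℝ (Fin n) := (WithLp.equiv 2 _).symm x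
    have hv : v ≠ 0 := by simpa [v] using hx
    have h2 := h v
    have hnorm : 0 < ‖v‖ := norm_pos_iff.2 hv
    have hlt : 0 < c * ‖v‖ ^ 2 := by positivity
    have h3 : (0:ℝ) < ⟪v, Matrix.toEuclideanLin M v⟫ := lt_of_lt_of_le hlt h2
    simpa [EuclideanSpace.inner_eq_star_dotProduct, v, Matrix.toEuclideanLin_apply, dotProduct_comm] using h3

lemma ringInverse_matCLM {n : ℕ} {M : Matrix (Fin n) (Fin n) ℝ} (hM : IsUnit M) :
    Ring.inverse (matCLM n M) = matCLM n M⁻¹ := by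
  have hdet : IsUnit M.det := M.isUnit_iff_isUnit_det.1 hM
  have h1 : matCLM n M * matCLM n M⁻¹ = 1 := by
    rw [← matCLM_mul, Matrix.mul_nonsing_inv M hdet, matCLM_one]
  have h2 : matCLM n M⁻¹ * matCLM n M = 1 := by
    rw [← matCLM_mul, Matrix.nonsing_inv_mul M hdet, matCLM_one]
  let u : (EuclideanSpace ℝ (Fin n) →L[ℝ] EuclideanSpace ℝ (Fin n))ˣ :=
    ⟨matCLM n M, matCLM n M⁻¹, h1, h2⟩
  have : matCLM n M = (u : _) := rfl
  rw [this, Ring.inverse_unit]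
  rfl

lemma isUnit_matCLM {n : ℕ} {M : Matrix (Fin n) (Fin n) ℝ} (hM : IsUnit M) :
    IsUnit (matCLM n M) := by
  have hdet : IsUnit M.det := M.isUnit_iff_isUnit_det.1 hM
  have h1 : matCLM n M * matCLM n M⁻¹ = 1 := by
    rw [← matCLM_mul, Matrix.mul_nonsing_inv M hdet, matCLM_one]
  have h2 : matCLM n M⁻¹ * matCLM n M = 1 := by
    rw [← matCLM_mul, Matrix.nonsing_inv_mul M hdet, matCLM_one]
  exact ⟨⟨matCLM n M, matCLM n M⁻¹, h1, h2⟩, rfl⟩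

lemma matCLM_symm {n : ℕ} {M : Matrix (Fin n) (Fin n) ℝ} (hsymm : M.IsSymm)
    (u v : EuclideanSpace ℝ (Fin n)) :
    ⟪matCLM n M u, v⟫ = ⟪u, matCLM n M v⟫ := by
  have hherm : M.IsHermitian := by
    rwa [Matrix.IsHermitian, Matrix.conjTranspose_eq_transpose_of_trivial]
  have h := (Matrix.isHermitian_iff_isSymmetric.mp hherm) u v
  simpa [matCLM_apply] using h

lemma contDiff_deriv' {E : Type*} [NormedAddCommGroup E] [NormedSpace ℝ E]
    {f : ℝ → E} {k l : WithTop ℕ∞} (hf : ContDiff ℝ l f) (h : k + 1 ≤ l) :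
    ContDiff ℝ k (deriv f) := by
  have hderiv : deriv f = fun t => (fderiv ℝ f t) 1 := funext fun t => by rw [← fderiv_apply_one_eq_deriv]
  rw [hderiv]
  exact (hf.fderiv_right h).clm_apply contDiff_const

lemma sup_bound' {E F : Type*} [NormedAddCommGroup E] [NormedAddCommGroup F]
    (f : E → F) (hf : Continuous f) (s : Set E) (hs : IsCompact s) :
    ∃ K, 0 ≤ K ∧ ∀ x ∈ s, ‖f x‖ ≤ K := by
  obtain ⟨C, hC⟩ := hs.exists_bound_of_continuousOn hf.continuousOn
  exact ⟨max C 0, le_max_right _ _, fun x hx => (hC x hx).trans (le_max_left _ _)⟩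

lemma lipschitz_on' {E F : Type*} [NormedAddCommGroup E] [NormedSpace ℝ E]
    [NormedAddCommGroup F] [NormedSpace ℝ F]
    (f : E → F) (hf : ContDiff ℝ 1 f) (s : Set E) (hconv : Convex ℝ s) (hcomp : IsCompact s) :
    ∃ L, 0 ≤ L ∧ ∀ x ∈ s, ∀ y ∈ s, ‖f x - f y‖ ≤ L * ‖x - y‖ := by
  obtain ⟨K, hK0, hK⟩ := sup_bound' (fderiv ℝ f) (hf.continuous_fderiv (by norm_num)) s hcomp
  refine ⟨K, hK0, fun x hx y hy => ?_⟩
  exact hconv.norm_image_sub_le_of_norm_fderiv_le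
    (fun z _ => (hf.differentiable (by norm_num)).differentiableAt) hK hy hx

lemma gronwall_le' {δ K ε tf : ℝ} (hK : 0 < K) (hδ : 0 ≤ δ) (hε : 0 ≤ ε) {t : ℝ}
    (ht : t ≤ tf) :
    gronwallBound δ K ε t ≤ (δ + ε / K) * Real.exp (K * tf) := by
  rw [gronwallBound_of_K_ne_0 (ne_of_gt hK)]
  have he : Real.exp (K * t) ≤ Real.exp (K * tf) := by
    apply Real.exp_le_exp.2; nlinarith
  have hp : (0:ℝ) < Real.exp (K * t) := Real.exp_pos _
  have hd : 0 ≤ ε / K := div_nonneg hε hK.le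
  nlinarith [Real.exp_pos (K * tf)]

lemma contDiff_gradQ {d n : ℕ}
    {A : EuclideanSpace ℝ (Fin d) → Matrix (Fin n) (Fin n) ℝ}
    {b : EuclideanSpace ℝ (Fin d) → EuclideanSpace ℝ (Fin n)}
    (hA : ContDiff ℝ 3 A) (hb : ContDiff ℝ 3 b) :
    ContDiff ℝ 2 (fun p : (EuclideanSpace ℝ (Fin d)) × (EuclideanSpace ℝ (Fin n)) =>
      gradQ A b p.1 p.2) := by
  have hA' := hA.fderiv_right (m := 2) (by norm_num)
  have hb' : ContDiff ℝ 2 (fderiv ℝ b) := hb.fderiv_right (by norm_num)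
  have hcomp : (fun p : (EuclideanSpace ℝ (Fin d)) × (EuclideanSpace ℝ (Fin n)) =>
      gradQ A b p.1 p.2)
    = (fun q : Fin d → ℝ => (EuclideanSpace.equiv (Fin d) ℝ).symm q) ∘
      (fun p : (EuclideanSpace ℝ (Fin d)) × (EuclideanSpace ℝ (Fin n)) => fun k : Fin d =>
        (1/2) * ⟪p.2, matCLM n (fderiv ℝ A p.1 (EuclideanSpace.single k 1)) p.2⟫
          - ⟪(fderiv ℝ b p.1) (EuclideanSpace.single k 1), p.2⟫) := rfl
  rw [hcomp]
  apply ContDiff.comp ((EuclideanSpace.equiv (Fin d) ℝ).symm.contDiff)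
  apply contDiff_pi.2
  intro k
  have h1 : ContDiff ℝ 2 (fun p : (EuclideanSpace ℝ (Fin d)) × (EuclideanSpace ℝ (Fin n)) =>
      matCLM n (fderiv ℝ A p.1 (EuclideanSpace.single k 1)) p.2) := by
    apply ContDiff.clm_apply _ contDiff_snd
    exact (matCLM n).contDiff.comp
      ((hA'.comp contDiff_fst).clm_apply contDiff_const)
  have h2 : ContDiff ℝ 2 (fun p : (EuclideanSpace ℝ (Fin d)) × (EuclideanSpace ℝ (Fin n)) =>
      (fderiv ℝ b p.1) (EuclideanSpace.single k 1)) :=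
    (hb'.comp contDiff_fst).clm_apply contDiff_const
  exact (contDiff_const.mul (contDiff_snd.inner ℝ h1)).sub (h2.inner ℝ contDiff_snd)

lemma contDiff_phi {d n : ℕ}
    {A : EuclideanSpace ℝ (Fin d) → Matrix (Fin n) (Fin n) ℝ}
    {b : EuclideanSpace ℝ (Fin d) → EuclideanSpace ℝ (Fin n)}
    (hA : ContDiff ℝ 3 A) (hb : ContDiff ℝ 3 b)
    (hunit : ∀ r, IsUnit (matCLM n (A r))) :
    ContDiff ℝ 3 (fun r => Ring.inverse (matCLM n (A r)) (b r)) := by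
  rw [contDiff_iff_contDiffAt]
  intro r
  obtain ⟨u, hu⟩ := hunit r
  have hG : ContDiffAt ℝ 3 (fun r => matCLM n (A r)) r :=
    ((matCLM n).contDiff.comp hA).contDiffAt
  have hru : ContDiffAt ℝ 3 (Ring.inverse :
      (EuclideanSpace ℝ (Fin n) →L[ℝ] EuclideanSpace ℝ (Fin n)) → _) (matCLM n (A r)) := by
    rw [← hu]; exact contDiffAt_ringInverse ℝ u
  have hinv : ContDiffAt ℝ 3 (fun r => Ring.inverse (matCLM n (A r))) r :=
    ContDiffAt.comp (g := Ring.inverse) r hru hG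
  exact hinv.clm_apply hb.contDiffAt


set_option maxHeartbeats 4000000

theorem xlmd_sqrt_eps_error_r_p
    (d n : ℕ) (hd : 1 ≤ d) (hn : 1 ≤ n)
    (tf : ℝ) (htf : 0 < tf)
    (A : EuclideanSpace ℝ (Fin d) → Matrix (Fin n) (Fin n) ℝ)
    (b : EuclideanSpace ℝ (Fin d) → EuclideanSpace ℝ (Fin n))
    (F : EuclideanSpace ℝ (Fin d) → EuclideanSpace ℝ (Fin d))
    (hA : ContDiff ℝ 3 A) (hb : ContDiff ℝ 3 b) (hF : ContDiff ℝ 2 F)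
    (hAsymm : ∀ r, (A r).IsSymm)
    (c : ℝ) (hc : 0 < c)
    (hApos : ∀ (r : EuclideanSpace ℝ (Fin d)) (v : EuclideanSpace ℝ (Fin n)),
      c * ‖v‖ ^ 2 ≤ ⟪v, (Matrix.toEuclideanLin (A r)) v⟫)
    (C₀ M : ℝ)
    -- the exact solution r⋆ of the exact dynamics, C³, with a priori bounds C₀
    (rs : ℝ → EuclideanSpace ℝ (Fin d))
    (hrs : ContDiff ℝ 3 rs)
    (hrsode : ∀ t ∈ Icc (0:ℝ) tf,
      deriv (deriv rs) t
        = F (rs t) - gradQ A b (rs t)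
            ((Matrix.toEuclideanLin (A (rs t))⁻¹) (b (rs t))))
    (hrsbd : ∀ t ∈ Icc (0:ℝ) tf,
      ‖rs t‖ ≤ C₀ ∧ ‖deriv rs t‖ ≤ C₀ ∧ ‖deriv (deriv rs) t‖ ≤ C₀) :
    -- conclusion: a constant C depending only on A, b, F, r⋆, t_f, C₀, M (not on ε)
    ∃ C > 0, ∀ ε ∈ Ioc (0:ℝ) 1,
      ∀ (re : ℝ → EuclideanSpace ℝ (Fin d)) (xe : ℝ → EuclideanSpace ℝ (Fin n)),
      -- (rε, xε) is a C³ solution of the XLMD system on [0, t_f]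
      ContDiff ℝ 3 re → ContDiff ℝ 3 xe →
      (∀ t ∈ Icc (0:ℝ) tf,
        deriv (deriv re) t = F (re t) - gradQ A b (re t) (xe t)) →
      (∀ t ∈ Icc (0:ℝ) tf,
        ε • deriv (deriv xe) t
          = b (re t) - (Matrix.toEuclideanLin (A (re t))) (xe t)) →
      re 0 = rs 0 → deriv re 0 = deriv rs 0 →
      -- a priori bounds with constant C₀
      (∀ t ∈ Icc (0:ℝ) tf,
        ‖re t‖ ≤ C₀ ∧ ‖deriv re t‖ ≤ C₀ ∧ ‖deriv (deriv re) t‖ ≤ C₀ ∧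
        ‖xe t‖ ≤ C₀ ∧ Real.sqrt ε * ‖deriv xe t‖ ≤ C₀) →
      -- compatible initial condition with constant M
      xe 0 = (Matrix.toEuclideanLin (A (rs 0))⁻¹) (b (rs 0)) →
      ‖deriv xe 0‖ ≤ M →
      ∀ t ∈ Icc (0:ℝ) tf,
        ‖re t - rs t‖ ≤ C * Real.sqrt ε ∧
        ‖deriv re t - deriv rs t‖ ≤ C * Real.sqrt ε := by
  classical
  have hunitM : ∀ r, IsUnit (A r) :=
    fun r => (posDef_of_bound (hAsymm r) hc (hApos r)).isUnit
  have hunit : ∀ r, IsUnit (matCLM n (A r)) := fun r => isUnit_matCLM (hunitM r)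
  set G : EuclideanSpace ℝ (Fin d) → (EuclideanSpace ℝ (Fin n) →L[ℝ] EuclideanSpace ℝ (Fin n)) := fun r => matCLM n (A r) with hGdef
  have hG3 : ContDiff ℝ 3 G := (matCLM n).contDiff.comp hA
  set φ : EuclideanSpace ℝ (Fin d) → EuclideanSpace ℝ (Fin n) := fun r => Ring.inverse (matCLM n (A r)) (b r) with hφdef
  have hφ3 : ContDiff ℝ 3 φ := contDiff_phi hA hb hunit
  have hφ_eq : ∀ r, φ r = Matrix.toEuclideanLin (A r)⁻¹ (b r) := by
    intro r
    rw [hφdef]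
    simp only [ringInverse_matCLM (hunitM r), matCLM_apply]
  have hGφ : ∀ r, G r (φ r) = b r := by
    intro r
    have hdet : IsUnit (A r).det := (A r).isUnit_iff_isUnit_det.1 (hunitM r)
    rw [hφ_eq r, hGdef]
    show matCLM n (A r) (Matrix.toEuclideanLin (A r)⁻¹ (b r)) = b r
    have h1 : matCLM n (A r) (Matrix.toEuclideanLin (A r)⁻¹ (b r))
        = (matCLM n (A r) * matCLM n (A r)⁻¹) (b r) := rfl
    rw [h1, ← matCLM_mul, Matrix.mul_nonsing_inv _ hdet, matCLM_one,
      ContinuousLinearMap.one_apply]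
  -- compact convex sets
  set D₀ : ℝ := max C₀ 0 with hD₀def
  have hD₀0 : 0 ≤ D₀ := le_max_right _ _
  have hCD : C₀ ≤ D₀ := le_max_left _ _
  set sd : Set (EuclideanSpace ℝ (Fin d)) := Metric.closedBall 0 D₀ with hsddef
  obtain ⟨Bφ0, hBφ00, hBφ0⟩ := sup_bound' φ (hφ3.continuous) sd (isCompact_closedBall _ _)
  set Rn : ℝ := max D₀ Bφ0 with hRndef
  set sn : Set (EuclideanSpace ℝ (Fin n)) := Metric.closedBall 0 Rn with hsndef
  have hsd_conv : Convex ℝ sd := convex_closedBall _ _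
  have hsd_comp : IsCompact sd := isCompact_closedBall _ _
  have hsn_conv : Convex ℝ sn := convex_closedBall _ _
  have hsn_comp : IsCompact sn := isCompact_closedBall _ _
  -- Lipschitz and sup constants
  obtain ⟨LQ, hLQ0, hLQ⟩ := lipschitz_on' (fun p : (EuclideanSpace ℝ (Fin d)) × (EuclideanSpace ℝ (Fin n)) => gradQ A b p.1 p.2)
    ((contDiff_gradQ hA hb).of_le (by norm_num)) (sd ×ˢ sn) (hsd_conv.prod hsn_conv)
    (hsd_comp.prod hsn_comp)
  obtain ⟨LF, hLF0, hLF⟩ := lipschitz_on' F (hF.of_le (by norm_num)) sd hsd_conv hsd_comp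
  obtain ⟨Lφ, hLφ0, hLφ⟩ := lipschitz_on' φ (hφ3.of_le (by norm_num)) sd hsd_conv hsd_comp
  obtain ⟨Bφ1, hBφ10, hBφ1⟩ := sup_bound' (fderiv ℝ φ)
    (hφ3.continuous_fderiv (by norm_num)) sd hsd_comp
  obtain ⟨Bφ2, hBφ20, hBφ2⟩ := sup_bound' (fderiv ℝ (fderiv ℝ φ))
    ((hφ3.fderiv_right (m := 2) (by norm_num)).continuous_fderiv (by norm_num)) sd hsd_comp
  obtain ⟨BG1, hBG10, hBG1⟩ := sup_bound' (fderiv ℝ G)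
    (hG3.continuous_fderiv (by norm_num)) sd hsd_comp
  -- constants
  set W : ℝ := Bφ2 * D₀ * D₀ + Bφ1 * D₀ with hWdef
  have hW0 : 0 ≤ W := by positivity
  set Kg : ℝ := BG1 * D₀ with hKgdef
  have hKg0 : 0 ≤ Kg := by positivity
  set Kf : ℝ := Kg / (2 * c) + 1 with hKfdef
  have hKf0 : 0 < Kf := by positivity
  set M' : ℝ := max M 0 + Bφ1 * D₀ with hM'def
  have hM'0 : 0 ≤ M' := by positivity
  set δc : ℝ := Real.sqrt (M' ^ 2 / 2 + 1) with hδcdef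
  have hδc0 : 0 ≤ δc := Real.sqrt_nonneg _
  set Cf : ℝ := (δc + Real.sqrt 2 * W / 2 / Kf) * Real.exp (Kf * tf) with hCfdef
  have hCf0 : 0 ≤ Cf := by positivity
  set C₂ : ℝ := Real.sqrt (2 / c) * Cf with hC₂def
  have hC₂0 : 0 ≤ C₂ := by positivity
  set Ks : ℝ := 1 + LF + LQ * (1 + Lφ) with hKsdef
  have hKs0 : 0 < Ks := by positivity
  set C₃ : ℝ := LQ * C₂ / Ks * Real.exp (Ks * tf) with hC₃def
  have hC₃0 : 0 ≤ C₃ := by positivity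
  refine ⟨max C₃ 1, lt_of_lt_of_le one_pos (le_max_right _ _), ?_⟩
  rintro ε ⟨hε0, hε1⟩ re xe hre hxe hreode hxeode hre0 hdre0 hbd hx0 hdx0
  have hεpos : (0:ℝ) < ε := hε0
  have hsqε : 0 < Real.sqrt ε := Real.sqrt_pos.2 hε0
  have h0mem : (0:ℝ) ∈ Icc (0:ℝ) tf := ⟨le_rfl, htf.le⟩
  have hGsymm : ∀ r u v, ⟪G r u, v⟫ = ⟪u, G r v⟫ := fun r => matCLM_symm (hAsymm r)
  have hGpos : ∀ r (v : EuclideanSpace ℝ (Fin n)), c * ‖v‖ ^ 2 ≤ ⟪v, G r v⟫ := fun r v =>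
    hApos r v
  -- memberships
  have hre_mem : ∀ t ∈ Icc (0:ℝ) tf, re t ∈ sd := fun t ht => by
    rw [hsddef, Metric.mem_closedBall, dist_zero_right]; exact (hbd t ht).1.trans hCD
  have hrs_mem : ∀ t ∈ Icc (0:ℝ) tf, rs t ∈ sd := fun t ht => by
    rw [hsddef, Metric.mem_closedBall, dist_zero_right]; exact (hrsbd t ht).1.trans hCD
  have hxe_mem : ∀ t ∈ Icc (0:ℝ) tf, xe t ∈ sn := fun t ht => by
    rw [hsndef, Metric.mem_closedBall, dist_zero_right]
    exact ((hbd t ht).2.2.2.1.trans hCD).trans (le_max_left _ _)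
  have hφrs_mem : ∀ t ∈ Icc (0:ℝ) tf, φ (rs t) ∈ sn := fun t ht => by
    rw [hsndef, Metric.mem_closedBall, dist_zero_right]
    exact (hBφ0 _ (hrs_mem t ht)).trans (le_max_right _ _)
  have hdre_bd : ∀ t ∈ Icc (0:ℝ) tf, ‖deriv re t‖ ≤ D₀ := fun t ht => (hbd t ht).2.1.trans hCD
  have hddre_bd : ∀ t ∈ Icc (0:ℝ) tf, ‖deriv (deriv re) t‖ ≤ D₀ := fun t ht =>
    (hbd t ht).2.2.1.trans hCD
  -- differentiability bookkeeping
  have hre1 : Differentiable ℝ re := hre.differentiable (by norm_num)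
  have hrs1 : Differentiable ℝ rs := hrs.differentiable (by norm_num)
  have hre' : ContDiff ℝ 2 (deriv re) := contDiff_deriv' hre (by norm_num)
  have hrs' : ContDiff ℝ 2 (deriv rs) := contDiff_deriv' hrs (by norm_num)
  have hxe' : ContDiff ℝ 2 (deriv xe) := contDiff_deriv' hxe (by norm_num)
  set y : ℝ → EuclideanSpace ℝ (Fin n) := fun t => xe t - φ (re t) with hydef
  have hφre3 : ContDiff ℝ 3 (fun t => φ (re t)) := hφ3.comp hre
  have hy3 : ContDiff ℝ 3 y := hxe.sub hφre3
  have hy1 : Differentiable ℝ y := hy3.differentiable (by norm_num)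
  have hyc' : ContDiff ℝ 2 (deriv y) := contDiff_deriv' hy3 (by norm_num)
  have hφreD : ∀ t, HasDerivAt (fun s => φ (re s)) ((fderiv ℝ φ (re t)) (deriv re t)) t :=
    fun t => ((hφ3.differentiable (by norm_num) (re t)).hasFDerivAt).comp_hasDerivAt t
      (hre1 t).hasDerivAt
  have hder_φre : deriv (fun s => φ (re s)) = fun t => (fderiv ℝ φ (re t)) (deriv re t) :=
    funext fun t => (hφreD t).deriv
  set w : ℝ → EuclideanSpace ℝ (Fin n) := deriv (deriv (fun s => φ (re s))) with hwdef
  have hwD : ∀ t, w t = (fderiv ℝ (fderiv ℝ φ) (re t) (deriv re t)) (deriv re t)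
      + (fderiv ℝ φ (re t)) (deriv (deriv re) t) := by
    intro t
    rw [hwdef, hder_φre]
    have hcc : HasDerivAt (fun s => fderiv ℝ φ (re s))
        (fderiv ℝ (fderiv ℝ φ) (re t) (deriv re t)) t :=
      (((hφ3.fderiv_right (m := 2) (by norm_num)).differentiable
        (by norm_num) (re t)).hasFDerivAt).comp_hasDerivAt t (hre1 t).hasDerivAt
    have hu : HasDerivAt (deriv re) (deriv (deriv re) t) t :=
      ((hre'.differentiable (by norm_num)) t).hasDerivAt
    exact (hcc.clm_apply hu).deriv
  have hwbd : ∀ t ∈ Icc (0:ℝ) tf, ‖w t‖ ≤ W := by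
    intro t ht
    rw [hwD t]
    have h1 : ‖(fderiv ℝ (fderiv ℝ φ) (re t) (deriv re t)) (deriv re t)‖ ≤ Bφ2 * D₀ * D₀ := by
      calc ‖(fderiv ℝ (fderiv ℝ φ) (re t) (deriv re t)) (deriv re t)‖
          ≤ ‖fderiv ℝ (fderiv ℝ φ) (re t) (deriv re t)‖ * ‖deriv re t‖ :=
            ContinuousLinearMap.le_opNorm _ _
        _ ≤ (‖fderiv ℝ (fderiv ℝ φ) (re t)‖ * ‖deriv re t‖) * ‖deriv re t‖ := by
            gcongr; exact ContinuousLinearMap.le_opNorm _ _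
        _ ≤ (Bφ2 * D₀) * D₀ := by
            gcongr <;> [exact hBφ2 _ (hre_mem t ht); exact hdre_bd t ht; exact hdre_bd t ht]
        _ = Bφ2 * D₀ * D₀ := by ring
    have h2 : ‖(fderiv ℝ φ (re t)) (deriv (deriv re) t)‖ ≤ Bφ1 * D₀ := by
      calc ‖(fderiv ℝ φ (re t)) (deriv (deriv re) t)‖
          ≤ ‖fderiv ℝ φ (re t)‖ * ‖deriv (deriv re) t‖ := ContinuousLinearMap.le_opNorm _ _
        _ ≤ Bφ1 * D₀ := by gcongr; exacts [hBφ1 _ (hre_mem t ht), hddre_bd t ht]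
    calc ‖_ + _‖ ≤ _ + _ := norm_add_le _ _
      _ ≤ W := by rw [hWdef]; exact add_le_add h1 h2
  -- derivative decomposition of y
  have hd1 : deriv y = fun s => deriv xe s - deriv (fun u => φ (re u)) s := by
    funext s
    exact deriv_sub ((hxe.differentiable (by norm_num)) s)
      ((hφre3.differentiable (by norm_num)) s)
  have hd2 : ∀ t, deriv (deriv y) t = deriv (deriv xe) t - w t := by
    intro t
    rw [hd1, hwdef]
    exact deriv_sub ((hxe'.differentiable (by norm_num)) t)
      (((contDiff_deriv' hφre3 (by norm_num) : ContDiff ℝ 2 _).differentiable (by norm_num)) t)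
  -- ODE satisfied by y
  have hyode : ∀ t ∈ Icc (0:ℝ) tf,
      ε • deriv (deriv y) t = -(G (re t) (y t)) - ε • w t := by
    intro t ht
    rw [hd2 t, smul_sub, hxeode t ht]
    have hGx : b (re t) - Matrix.toEuclideanLin (A (re t)) (xe t) = -(G (re t) (y t)) := by
      have h1 : G (re t) (y t) = G (re t) (xe t) - b (re t) := by
        have : y t = xe t - φ (re t) := rfl
        rw [this, map_sub, hGφ (re t)]
      have h2 : G (re t) (xe t) = Matrix.toEuclideanLin (A (re t)) (xe t) := rfl
      rw [h1, h2]; abel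
    rw [hGx]
  -- energy function
  set En : ℝ → ℝ := fun t => ε/2 * ⟪deriv y t, deriv y t⟫ + 1/2 * ⟪y t, G (re t) (y t)⟫
    with hEdef
  set En' : ℝ → ℝ := fun t => ε * ⟪deriv (deriv y) t, deriv y t⟫
      + ⟪deriv y t, G (re t) (y t)⟫
      + 1/2 * ⟪y t, (fderiv ℝ G (re t) (deriv re t)) (y t)⟫ with hE'def
  have hEderiv : ∀ t, HasDerivAt En (En' t) t := by
    intro t
    have hyd : HasDerivAt y (deriv y t) t := (hy1 t).hasDerivAt
    have hyd' : HasDerivAt (deriv y) (deriv (deriv y) t) t :=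
      ((hyc'.differentiable (by norm_num)) t).hasDerivAt
    have hGt : HasDerivAt (fun s => G (re s)) (fderiv ℝ G (re t) (deriv re t)) t :=
      ((hG3.differentiable (by norm_num) (re t)).hasFDerivAt).comp_hasDerivAt t
        (hre1 t).hasDerivAt
    have hGy : HasDerivAt (fun s => G (re s) (y s))
        ((fderiv ℝ G (re t) (deriv re t)) (y t) + G (re t) (deriv y t)) t :=
      hGt.clm_apply hyd
    have h1 : HasDerivAt (fun s => ε/2 * ⟪deriv y s, deriv y s⟫)
        (ε/2 * (⟪deriv y t, deriv (deriv y) t⟫ + ⟪deriv (deriv y) t, deriv y t⟫)) t :=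
      (hyd'.inner ℝ hyd').const_mul (ε/2)
    have h2 : HasDerivAt (fun s => 1/2 * ⟪y s, G (re s) (y s)⟫)
        (1/2 * (⟪y t, (fderiv ℝ G (re t) (deriv re t)) (y t) + G (re t) (deriv y t)⟫
          + ⟪deriv y t, G (re t) (y t)⟫)) t :=
      (hyd.inner ℝ hGy).const_mul (1/2)
    have hsum := h1.add h2
    refine hsum.congr_deriv ?_
    rw [hE'def]
    have hsy : ⟪y t, G (re t) (deriv y t)⟫ = ⟪deriv y t, G (re t) (y t)⟫ := by
      rw [← hGsymm (re t) (y t) (deriv y t)]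
      exact real_inner_comm _ _
    simp only [hE'def, inner_add_right, hsy, real_inner_comm (deriv y t) (deriv (deriv y) t)]
    ring
  -- En' simplification on Icc
  have hE'icc : ∀ t ∈ Icc (0:ℝ) tf,
      En' t = -(ε * ⟪w t, deriv y t⟫)
        + 1/2 * ⟪y t, (fderiv ℝ G (re t) (deriv re t)) (y t)⟫ := by
    intro t ht
    have h1 : ε * ⟪deriv (deriv y) t, deriv y t⟫ = ⟪ε • deriv (deriv y) t, deriv y t⟫ :=
      (real_inner_smul_left _ _ _).symm
    have h2 : ⟪ε • deriv (deriv y) t, deriv y t⟫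
        = -⟪G (re t) (y t), deriv y t⟫ - ε * ⟪w t, deriv y t⟫ := by
      rw [hyode t ht, inner_sub_left, inner_neg_left, real_inner_smul_left]
    have h3 : ⟪G (re t) (y t), deriv y t⟫ = ⟪deriv y t, G (re t) (y t)⟫ :=
      real_inner_comm _ _
    simp only [hE'def, h1, h2, h3]
    ring
  -- coercivity
  have hEy1 : ∀ t, c * ‖y t‖^2 ≤ 2 * En t := by
    intro t
    have h1 := hGpos (re t) (y t)
    have h2 : ⟪deriv y t, deriv y t⟫ = ‖deriv y t‖^2 := real_inner_self_eq_norm_sq _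
    have h3 : 0 ≤ ε/2 * ⟪deriv y t, deriv y t⟫ := by rw [h2]; positivity
    simp only [hEdef]
    linarith
  have hEy2 : ∀ t, ε * ‖deriv y t‖^2 ≤ 2 * En t := by
    intro t
    have h1 := hGpos (re t) (y t)
    have h2 : ⟪deriv y t, deriv y t⟫ = ‖deriv y t‖^2 := real_inner_self_eq_norm_sq _
    have h3 : 0 ≤ c * ‖y t‖^2 := by positivity
    simp only [hEdef, h2]
    linarith
  have hEnn : ∀ t, 0 ≤ En t := by
    intro t
    have h := hEy1 t
    have h2 : 0 ≤ c * ‖y t‖^2 := by positivity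
    linarith
  -- the auxiliary function ψ
  set ψ : ℝ → ℝ := fun t => Real.sqrt (En t + ε) with hψdef
  have hψpos : ∀ t, 0 < En t + ε := fun t => by have := hEnn t; linarith
  have hψ0 : ∀ t, 0 < ψ t := fun t => Real.sqrt_pos.2 (hψpos t)
  have hψsq : ∀ t, ψ t ^ 2 = En t + ε := fun t => Real.sq_sqrt (hψpos t).le
  have hψD : ∀ t, HasDerivAt ψ (1 / (2 * ψ t) * En' t) t := by
    intro t
    have h := (Real.hasDerivAt_sqrt (ne_of_gt (hψpos t))).comp t ((hEderiv t).add_const ε)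
    exact h
  -- initial bound
  have hy0 : y 0 = 0 := by
    show xe 0 - φ (re 0) = 0
    rw [hx0, hre0, hφ_eq (rs 0), sub_self]
  have hy'0bd : ‖deriv y 0‖ ≤ M' := by
    have h1 : deriv y 0 = deriv xe 0 - (fderiv ℝ φ (re 0)) (deriv re 0) := by
      rw [hd1, hder_φre]
    rw [h1]
    have h2 : ‖(fderiv ℝ φ (re 0)) (deriv re 0)‖ ≤ Bφ1 * D₀ := by
      calc ‖(fderiv ℝ φ (re 0)) (deriv re 0)‖ ≤ ‖fderiv ℝ φ (re 0)‖ * ‖deriv re 0‖ :=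
            ContinuousLinearMap.le_opNorm _ _
        _ ≤ Bφ1 * D₀ := by
            gcongr
            exacts [hBφ1 _ (hre_mem 0 h0mem), hdre_bd 0 h0mem]
    calc ‖deriv xe 0 - (fderiv ℝ φ (re 0)) (deriv re 0)‖
        ≤ ‖deriv xe 0‖ + ‖(fderiv ℝ φ (re 0)) (deriv re 0)‖ := norm_sub_le _ _
      _ ≤ max M 0 + Bφ1 * D₀ := add_le_add (hdx0.trans (le_max_left _ _)) h2
      _ = M' := by rw [hM'def]
  have hψinit : ψ 0 ≤ Real.sqrt ε * δc := by
    have hE0 : En 0 ≤ ε * (M' ^ 2 / 2) := by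
      have h2 : ⟪deriv y 0, deriv y 0⟫ = ‖deriv y 0‖^2 := real_inner_self_eq_norm_sq _
      have h3 : ‖deriv y 0‖^2 ≤ M'^2 := pow_le_pow_left₀ (norm_nonneg _) hy'0bd 2
      have h5 : ε/2 * ‖deriv y 0‖^2 ≤ ε/2 * M'^2 :=
        mul_le_mul_of_nonneg_left h3 (by positivity)
      simp only [hEdef, hy0, inner_zero_left, map_zero]
      rw [h2]
      linarith
    have h4 : En 0 + ε ≤ ε * (M' ^ 2 / 2 + 1) := by
      have : ε * (M' ^ 2 / 2 + 1) = ε * (M' ^ 2 / 2) + ε := by ring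
      linarith
    calc ψ 0 ≤ Real.sqrt (ε * (M' ^ 2 / 2 + 1)) := Real.sqrt_le_sqrt h4
      _ = Real.sqrt ε * δc := by rw [Real.sqrt_mul hεpos.le, hδcdef]
  -- pointwise derivative bound
  have hψbound : ∀ t ∈ Ico (0:ℝ) tf,
      ‖1 / (2 * ψ t) * En' t‖ ≤ Kf * ‖ψ t‖ + (Real.sqrt 2 * W / 2) * Real.sqrt ε := by
    intro t ht
    have ht' : t ∈ Icc (0:ℝ) tf := ⟨ht.1, ht.2.le⟩
    have hfg : ‖fderiv ℝ G (re t) (deriv re t)‖ ≤ Kg := by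
      calc ‖fderiv ℝ G (re t) (deriv re t)‖ ≤ ‖fderiv ℝ G (re t)‖ * ‖deriv re t‖ :=
            ContinuousLinearMap.le_opNorm _ _
        _ ≤ BG1 * D₀ := by gcongr; exacts [hBG1 _ (hre_mem t ht'), hdre_bd t ht']
        _ = Kg := by rw [hKgdef]
    have hE'abs : |En' t| ≤ ε * (W * ‖deriv y t‖) + Kg / 2 * ‖y t‖^2 := by
      rw [hE'icc t ht']
      have ha : |ε * ⟪w t, deriv y t⟫| ≤ ε * (W * ‖deriv y t‖) := by
        rw [abs_mul, abs_of_pos hεpos]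
        have : |⟪w t, deriv y t⟫| ≤ ‖w t‖ * ‖deriv y t‖ := abs_real_inner_le_norm _ _
        have h2 : ‖w t‖ * ‖deriv y t‖ ≤ W * ‖deriv y t‖ := by
          gcongr; exact hwbd t ht'
        gcongr
        exact this.trans h2
      have hb2 : |1/2 * ⟪y t, (fderiv ℝ G (re t) (deriv re t)) (y t)⟫| ≤ Kg / 2 * ‖y t‖^2 := by
        rw [abs_mul]
        have h1 : |⟪y t, (fderiv ℝ G (re t) (deriv re t)) (y t)⟫|
            ≤ ‖y t‖ * (Kg * ‖y t‖) := by
          calc |⟪y t, (fderiv ℝ G (re t) (deriv re t)) (y t)⟫|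
              ≤ ‖y t‖ * ‖(fderiv ℝ G (re t) (deriv re t)) (y t)‖ := abs_real_inner_le_norm _ _
            _ ≤ ‖y t‖ * (‖fderiv ℝ G (re t) (deriv re t)‖ * ‖y t‖) := by
                gcongr; exact ContinuousLinearMap.le_opNorm _ _
            _ ≤ ‖y t‖ * (Kg * ‖y t‖) := by gcongr
        have habs : |(1:ℝ)/2| = 1/2 := by norm_num
        rw [habs]
        have heq : ‖y t‖ * (Kg * ‖y t‖) = Kg * ‖y t‖^2 := by ring
        rw [heq] at h1
        linarith
      calc |_ + _| ≤ |-(ε * ⟪w t, deriv y t⟫)| + |1/2 * ⟪y t, (fderiv ℝ G (re t) (deriv re t)) (y t)⟫| := abs_add_le _ _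
        _ ≤ ε * (W * ‖deriv y t‖) + Kg / 2 * ‖y t‖^2 := by
            rw [abs_neg]; exact add_le_add ha hb2
    -- key inequalities
    have hy'ψ : Real.sqrt ε * ‖deriv y t‖ ≤ Real.sqrt 2 * ψ t := by
      have hsq2 : (Real.sqrt ε * ‖deriv y t‖)^2 ≤ (Real.sqrt 2 * ψ t)^2 := by
        rw [mul_pow, mul_pow, Real.sq_sqrt hεpos.le, Real.sq_sqrt (by norm_num : (0:ℝ) ≤ 2),
          hψsq]
        linarith [hEy2 t, hεpos.le]
      have hmono := Real.sqrt_le_sqrt hsq2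
      rwa [Real.sqrt_sq (by positivity), Real.sqrt_sq (by positivity)] at hmono
    have hyψ : ‖y t‖^2 ≤ 2/c * ψ t^2 := by
      rw [hψsq]
      have h1 := hEy1 t
      rw [show (2/c * (En t + ε) : ℝ) = (2 * (En t + ε))/c by ring, le_div_iff₀ hc]
      have h2 : ‖y t‖^2 * c = c * ‖y t‖^2 := by ring
      rw [h2]
      linarith [hεpos.le]
    -- assemble
    have h2ψ : 0 < 2 * ψ t := by linarith [hψ0 t]
    rw [Real.norm_eq_abs, Real.norm_eq_abs, abs_mul, abs_of_nonneg (hψ0 t).le]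
    have hE'final : |En' t| ≤ (Kf * ψ t + (Real.sqrt 2 * W / 2) * Real.sqrt ε) * (2 * ψ t) := by
      have k1 : ε * (W * ‖deriv y t‖) ≤ Real.sqrt ε * W * (Real.sqrt 2 * ψ t) := by
        have hss : Real.sqrt ε * Real.sqrt ε = ε := Real.mul_self_sqrt hεpos.le
        have hkey : ε * (W * ‖deriv y t‖)
            = Real.sqrt ε * W * (Real.sqrt ε * ‖deriv y t‖) := by
          calc ε * (W * ‖deriv y t‖)
              = (Real.sqrt ε * Real.sqrt ε) * (W * ‖deriv y t‖) := by rw [hss]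
            _ = Real.sqrt ε * W * (Real.sqrt ε * ‖deriv y t‖) := by ring
        rw [hkey]
        exact mul_le_mul_of_nonneg_left hy'ψ (mul_nonneg (Real.sqrt_nonneg ε) hW0)
      have k2 : Kg / 2 * ‖y t‖^2 ≤ Kg / 2 * (2/c * ψ t^2) := by
        apply mul_le_mul_of_nonneg_left hyψ; positivity
      have k3 : Kg / 2 * (2/c * ψ t^2) = Kg / (2*c) * ψ t * (2 * ψ t) := by
        field_simp
      have k4 : Real.sqrt ε * W * (Real.sqrt 2 * ψ t)
          = (Real.sqrt 2 * W / 2) * Real.sqrt ε * (2 * ψ t) := by ring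
      calc |En' t| ≤ ε * (W * ‖deriv y t‖) + Kg / 2 * ‖y t‖^2 := hE'abs
        _ ≤ (Real.sqrt 2 * W / 2) * Real.sqrt ε * (2 * ψ t) + Kg / (2*c) * ψ t * (2 * ψ t) := by
            rw [← k4, ← k3]; exact add_le_add k1 k2
        _ ≤ (Kf * ψ t + (Real.sqrt 2 * W / 2) * Real.sqrt ε) * (2 * ψ t) := by
            have key : (Kf * ψ t + (Real.sqrt 2 * W / 2) * Real.sqrt ε) * (2 * ψ t)
                = (Real.sqrt 2 * W / 2) * Real.sqrt ε * (2 * ψ t)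
                  + Kg / (2*c) * ψ t * (2 * ψ t) + 2 * ψ t^2 := by
              rw [hKfdef]; ring
            rw [key]
            linarith [sq_nonneg (ψ t)]
    have habs1 : |1 / (2 * ψ t)| = 1 / (2 * ψ t) := abs_of_pos (by positivity)
    rw [habs1, one_div, inv_mul_le_iff₀ h2ψ]
    calc |En' t| ≤ (Kf * ψ t + (Real.sqrt 2 * W / 2) * Real.sqrt ε) * (2 * ψ t) := hE'final
      _ = 2 * ψ t * (Kf * ψ t + Real.sqrt 2 * W / 2 * Real.sqrt ε) := by ring
  -- fast Gronwall
  have hψbd : ∀ t ∈ Icc (0:ℝ) tf, ψ t ≤ Real.sqrt ε * Cf := by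
    have hcont : ContinuousOn ψ (Icc (0:ℝ) tf) :=
      (continuous_iff_continuousAt.2 fun t => (hψD t).continuousAt).continuousOn
    have hder : ∀ t ∈ Ico (0:ℝ) tf,
        HasDerivWithinAt ψ (1 / (2 * ψ t) * En' t) (Ici t) t :=
      fun t _ => (hψD t).hasDerivWithinAt
    have ha : ‖ψ 0‖ ≤ Real.sqrt ε * δc := by
      rw [Real.norm_eq_abs, abs_of_nonneg (hψ0 0).le]; exact hψinit
    have hgr := norm_le_gronwallBound_of_norm_deriv_right_le hcont hder ha hψbound
    intro t ht
    have h2 := hgr t ht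
    rw [Real.norm_eq_abs, abs_of_nonneg (hψ0 t).le, sub_zero] at h2
    have h3 : gronwallBound (Real.sqrt ε * δc) Kf ((Real.sqrt 2 * W / 2) * Real.sqrt ε) t
        ≤ (Real.sqrt ε * δc + (Real.sqrt 2 * W / 2) * Real.sqrt ε / Kf) * Real.exp (Kf * tf) :=
      gronwall_le' hKf0 (by positivity) (by positivity) ht.2
    calc ψ t ≤ _ := h2
      _ ≤ (Real.sqrt ε * δc + (Real.sqrt 2 * W / 2) * Real.sqrt ε / Kf) * Real.exp (Kf * tf) := h3
      _ = Real.sqrt ε * Cf := by rw [hCfdef]; field_simp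
  -- bound on y
  have hybd : ∀ t ∈ Icc (0:ℝ) tf, ‖y t‖ ≤ C₂ * Real.sqrt ε := by
    intro t ht
    have h := hψbd t ht
    have h1 := hEy1 t
    have h2 := hψsq t
    have hψ2 : ψ t^2 ≤ ε * Cf^2 := by
      have ha : ψ t^2 ≤ (Real.sqrt ε * Cf)^2 := pow_le_pow_left₀ (hψ0 t).le h 2
      have hb2 : (Real.sqrt ε * Cf)^2 = ε * Cf^2 := by
        rw [mul_pow, Real.sq_sqrt hεpos.le]
      linarith [ha, hb2.le, hb2.ge]
    have h2c : Real.sqrt (2/c) ^ 2 = 2/c := Real.sq_sqrt (by positivity)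
    have hsε : Real.sqrt ε ^ 2 = ε := Real.sq_sqrt hεpos.le
    have hsq : ‖y t‖^2 ≤ (C₂ * Real.sqrt ε)^2 := by
      have hC2sq : (C₂ * Real.sqrt ε)^2 = (2 * Cf^2 * ε) / c := by
        rw [hC₂def, mul_pow, mul_pow, h2c, hsε]; ring
      rw [hC2sq, le_div_iff₀ hc]
      have e1 : c * ‖y t‖^2 ≤ 2 * ε * Cf^2 := by linarith [hεpos.le]
      have e2 : ‖y t‖^2 * c = c * ‖y t‖^2 := by ring
      rw [e2]
      linarith
    have hmono := Real.sqrt_le_sqrt hsq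
    rwa [Real.sqrt_sq (norm_nonneg _), Real.sqrt_sq (by positivity)] at hmono
  -- slow Gronwall
  have hrsode' : ∀ t ∈ Icc (0:ℝ) tf,
      deriv (deriv rs) t = F (rs t) - gradQ A b (rs t) (φ (rs t)) := by
    intro t ht
    rw [hrsode t ht, hφ_eq]
  set fe : ℝ → (EuclideanSpace ℝ (Fin d)) × (EuclideanSpace ℝ (Fin d)) :=
    fun t => (re t - rs t, deriv re t - deriv rs t) with hfedef
  set fe' : ℝ → (EuclideanSpace ℝ (Fin d)) × (EuclideanSpace ℝ (Fin d)) :=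
    fun t => (deriv re t - deriv rs t, deriv (deriv re) t - deriv (deriv rs) t) with hfe'def
  have hfeD : ∀ t, HasDerivAt fe (fe' t) t := by
    intro t
    exact ((hre1 t).hasDerivAt.sub (hrs1 t).hasDerivAt).prodMk
      ((((hre'.differentiable (by norm_num)) t).hasDerivAt).sub
        (((hrs'.differentiable (by norm_num)) t).hasDerivAt))
  have hfe0 : ‖fe 0‖ ≤ 0 := by
    have h : fe 0 = 0 := by
      simp only [hfedef, hre0, hdre0, sub_self]; rfl
    rw [h, norm_zero]
  have hfebound : ∀ t ∈ Ico (0:ℝ) tf,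
      ‖fe' t‖ ≤ Ks * ‖fe t‖ + LQ * C₂ * Real.sqrt ε := by
    intro t ht
    have ht' : t ∈ Icc (0:ℝ) tf := ⟨ht.1, ht.2.le⟩
    have he1 : ‖re t - rs t‖ ≤ ‖fe t‖ := by
      have h := norm_fst_le (fe t); simpa [hfedef] using h
    have he2 : ‖deriv re t - deriv rs t‖ ≤ ‖fe t‖ := by
      have h := norm_snd_le (fe t); simpa [hfedef] using h
    have hfnn : 0 ≤ ‖fe t‖ := norm_nonneg _
    have hεQ : 0 ≤ LQ * C₂ * Real.sqrt ε := by positivity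
    have hsnd : deriv (deriv re) t - deriv (deriv rs) t
        = (F (re t) - F (rs t)) - (gradQ A b (re t) (xe t) - gradQ A b (rs t) (φ (rs t))) := by
      rw [hreode t ht', hrsode' t ht']; abel
    have hFd : ‖F (re t) - F (rs t)‖ ≤ LF * ‖re t - rs t‖ :=
      hLF _ (hre_mem t ht') _ (hrs_mem t ht')
    have hxd : ‖xe t - φ (rs t)‖ ≤ Lφ * ‖re t - rs t‖ + C₂ * Real.sqrt ε := by
      have hxs : xe t - φ (rs t) = y t + (φ (re t) - φ (rs t)) := by
        show xe t - φ (rs t) = (xe t - φ (re t)) + (φ (re t) - φ (rs t)); abel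
      rw [hxs]
      calc ‖y t + (φ (re t) - φ (rs t))‖ ≤ ‖y t‖ + ‖φ (re t) - φ (rs t)‖ := norm_add_le _ _
        _ ≤ C₂ * Real.sqrt ε + Lφ * ‖re t - rs t‖ :=
            add_le_add (hybd t ht') (hLφ _ (hre_mem t ht') _ (hrs_mem t ht'))
        _ = Lφ * ‖re t - rs t‖ + C₂ * Real.sqrt ε := by ring
    have hQd : ‖gradQ A b (re t) (xe t) - gradQ A b (rs t) (φ (rs t))‖
        ≤ LQ * (‖re t - rs t‖ + (Lφ * ‖re t - rs t‖ + C₂ * Real.sqrt ε)) := by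
      have hmem1 : ((re t, xe t) :
          (EuclideanSpace ℝ (Fin d)) × (EuclideanSpace ℝ (Fin n))) ∈ sd ×ˢ sn :=
        ⟨hre_mem t ht', hxe_mem t ht'⟩
      have hmem2 : ((rs t, φ (rs t)) :
          (EuclideanSpace ℝ (Fin d)) × (EuclideanSpace ℝ (Fin n))) ∈ sd ×ˢ sn :=
        ⟨hrs_mem t ht', hφrs_mem t ht'⟩
      have h := hLQ _ hmem1 _ hmem2
      have hpair : ‖((re t, xe t) :
          (EuclideanSpace ℝ (Fin d)) × (EuclideanSpace ℝ (Fin n))) - (rs t, φ (rs t))‖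
          ≤ ‖re t - rs t‖ + (Lφ * ‖re t - rs t‖ + C₂ * Real.sqrt ε) := by
        have heq : ((re t, xe t) :
            (EuclideanSpace ℝ (Fin d)) × (EuclideanSpace ℝ (Fin n))) - (rs t, φ (rs t))
            = (re t - rs t, xe t - φ (rs t)) := rfl
        rw [heq, Prod.norm_def]
        apply max_le
        · have hnn : 0 ≤ Lφ * ‖re t - rs t‖ + C₂ * Real.sqrt ε := by positivity
          simp only []
          linarith
        · have hnn : (0:ℝ) ≤ ‖re t - rs t‖ := norm_nonneg _
          simp only []
          linarith [hxd]
      calc ‖gradQ A b (re t) (xe t) - gradQ A b (rs t) (φ (rs t))‖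
          ≤ LQ * ‖((re t, xe t) :
            (EuclideanSpace ℝ (Fin d)) × (EuclideanSpace ℝ (Fin n))) - (rs t, φ (rs t))‖ := h
        _ ≤ LQ * (‖re t - rs t‖ + (Lφ * ‖re t - rs t‖ + C₂ * Real.sqrt ε)) :=
            mul_le_mul_of_nonneg_left hpair hLQ0
    have hsnd_bd : ‖deriv (deriv re) t - deriv (deriv rs) t‖
        ≤ Ks * ‖fe t‖ + LQ * C₂ * Real.sqrt ε := by
      rw [hsnd]
      calc ‖(F (re t) - F (rs t)) - (gradQ A b (re t) (xe t) - gradQ A b (rs t) (φ (rs t)))‖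
          ≤ ‖F (re t) - F (rs t)‖
            + ‖gradQ A b (re t) (xe t) - gradQ A b (rs t) (φ (rs t))‖ := norm_sub_le _ _
        _ ≤ LF * ‖re t - rs t‖
            + LQ * (‖re t - rs t‖ + (Lφ * ‖re t - rs t‖ + C₂ * Real.sqrt ε)) :=
            add_le_add hFd hQd
        _ ≤ Ks * ‖fe t‖ + LQ * C₂ * Real.sqrt ε := by
            rw [hKsdef]
            have m1 : LF * ‖re t - rs t‖ ≤ LF * ‖fe t‖ := mul_le_mul_of_nonneg_left he1 hLF0
            have m2 : LQ * ‖re t - rs t‖ ≤ LQ * ‖fe t‖ := mul_le_mul_of_nonneg_left he1 hLQ0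
            have m3 : LQ * (Lφ * ‖re t - rs t‖) ≤ LQ * (Lφ * ‖fe t‖) :=
              mul_le_mul_of_nonneg_left (mul_le_mul_of_nonneg_left he1 hLφ0) hLQ0
            have expand : (1 + LF + LQ * (1 + Lφ)) * ‖fe t‖
                = ‖fe t‖ + LF * ‖fe t‖ + LQ * ‖fe t‖ + LQ * (Lφ * ‖fe t‖) := by ring
            have expand2 : LF * ‖re t - rs t‖
                + LQ * (‖re t - rs t‖ + (Lφ * ‖re t - rs t‖ + C₂ * Real.sqrt ε))
                = LF * ‖re t - rs t‖ + LQ * ‖re t - rs t‖ + LQ * (Lφ * ‖re t - rs t‖)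
                  + LQ * (C₂ * Real.sqrt ε) := by ring
            have expand3 : LQ * C₂ * Real.sqrt ε = LQ * (C₂ * Real.sqrt ε) := by ring
            rw [expand, expand2, expand3]
            linarith
    have hfst_bd : ‖deriv re t - deriv rs t‖ ≤ Ks * ‖fe t‖ + LQ * C₂ * Real.sqrt ε := by
      have hKs1 : 1 ≤ Ks := by
        have m4 : 0 ≤ LQ * (1 + Lφ) := mul_nonneg hLQ0 (by linarith)
        rw [hKsdef]; linarith
      have m5 : ‖fe t‖ ≤ Ks * ‖fe t‖ := le_mul_of_one_le_left hfnn hKs1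
      linarith
    calc ‖fe' t‖
        = max ‖deriv re t - deriv rs t‖ ‖deriv (deriv re) t - deriv (deriv rs) t‖ := by
          rw [hfe'def]; rfl
      _ ≤ Ks * ‖fe t‖ + LQ * C₂ * Real.sqrt ε := max_le hfst_bd hsnd_bd
  have hfecont : ContinuousOn fe (Icc (0:ℝ) tf) :=
    (continuous_iff_continuousAt.2 fun t => (hfeD t).continuousAt).continuousOn
  have hgr2 := norm_le_gronwallBound_of_norm_deriv_right_le hfecont
    (fun t _ => (hfeD t).hasDerivWithinAt) hfe0 hfebound
  intro t ht
  have hfe_bd : ‖fe t‖ ≤ C₃ * Real.sqrt ε := by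
    have h2 := hgr2 t ht
    rw [sub_zero] at h2
    have h3 : gronwallBound 0 Ks (LQ * C₂ * Real.sqrt ε) t
        ≤ (0 + LQ * C₂ * Real.sqrt ε / Ks) * Real.exp (Ks * tf) :=
      gronwall_le' hKs0 le_rfl (by positivity) ht.2
    calc ‖fe t‖ ≤ _ := h2
      _ ≤ (0 + LQ * C₂ * Real.sqrt ε / Ks) * Real.exp (Ks * tf) := h3
      _ = C₃ * Real.sqrt ε := by rw [hC₃def]; field_simp; ring
  have hCle : C₃ * Real.sqrt ε ≤ max C₃ 1 * Real.sqrt ε :=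
    mul_le_mul_of_nonneg_right (le_max_left _ _) (Real.sqrt_nonneg _)
  constructor
  · have h := norm_fst_le (fe t)
    have h1 : ‖re t - rs t‖ ≤ ‖fe t‖ := by simpa [hfedef] using h
    exact h1.trans (hfe_bd.trans hCle)
  · have h := norm_snd_le (fe t)
    have h1 : ‖deriv re t - deriv rs t‖ ≤ ‖fe t‖ := by simpa [hfedef] using h
    exact h1.trans (hfe_bd.trans hCle)

end
end

section
/- Let U : ℝ^d → ℝ be C² with U(r) ≥ U_min for all r, let b : ℝ^d → ℝ^{d'} satisfy |b(r)| ≤ B for all r, and let A : ℝ^d → ℝ^{d'×d'} be C¹ with symmetric values satisfying vᵀA(r)v ≥ c|v|² for all r, v, where c > 0. Let r_⋆ be a C² solution on [0,t_f] of r̈_⋆ = −∇U(r_⋆) − ∇_r Q(r_⋆, x_⋆) with x_⋆(t) = A(r_⋆(t))⁻¹b(r_⋆(t)), and let E₀ = ½|ṙ_⋆(0)|² + U(r_⋆(0)) − ½ b(r_⋆(0))ᵀA(r_⋆(0))⁻¹b(r_⋆(0)). Then for all t ∈ [0,t_f]: ½|ṙ_⋆(t)|² ≤ E₀ − U_min +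 B²/(2c). -/
/- A priori kinetic-energy bound for the exact dynamics from energy conservation. -/

open scoped RealInnerProductSpace
open Set

noncomputable section

attribute [local instance] Matrix.normedAddCommGroup Matrix.normedSpace

namespace KineticAux
open Matrix
variable {n : ℕ}

lemma hasDerivAt_entry {G : ℝ → Matrix (Fin n) (Fin n) ℝ} {G' : Matrix (Fin n) (Fin n) ℝ}
    {t : ℝ} (h : HasDerivAt G G' t) (i j : Fin n) :
    HasDerivAt (fun t => G t i j) (G' i j) t := by
  exact (hasDerivAt_pi.1 ((hasDerivAt_pi.1 h) i)) j

lemma differentiableAt_det {m : ℝ → Matrix (Fin n) (Fin n) ℝ} {t : ℝ}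
    (h : ∀ i j, DifferentiableAt ℝ (fun t => m t i j) t) :
    DifferentiableAt ℝ (fun t => (m t).det) t := by
  simp only [Matrix.det_apply']
  exact DifferentiableAt.fun_sum fun σ _ =>
    (DifferentiableAt.fun_finsetProd (fun i _ => h (σ i) i)).const_mul _

lemma differentiableAt_adjugate {m : ℝ → Matrix (Fin n) (Fin n) ℝ} {t : ℝ}
    (h : ∀ i j, DifferentiableAt ℝ (fun t => m t i j) t) (k l : Fin n) :
    DifferentiableAt ℝ (fun t => (m t).adjugate k l) t := by
  simp only [Matrix.adjugate_apply]
  apply differentiableAt_det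
  intro i j
  simp only [Matrix.updateRow_apply]
  by_cases hi : i = l <;> simp [hi, h i j]

lemma differentiableAt_inv_entry {m : ℝ → Matrix (Fin n) (Fin n) ℝ} {t : ℝ}
    (h : ∀ i j, DifferentiableAt ℝ (fun t => m t i j) t)
    (hdet : (m t).det ≠ 0) (i j : Fin n) :
    DifferentiableAt ℝ (fun t => (m t)⁻¹ i j) t := by
  have he : (fun t => (m t)⁻¹ i j) = fun t => ((m t).det)⁻¹ * (m t).adjugate i j := by
    funext s
    rw [Matrix.inv_def, Matrix.smul_apply, Ring.inverse_eq_inv', smul_eq_mul]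
  rw [he]
  exact ((differentiableAt_det h).inv hdet).mul (differentiableAt_adjugate h i j)

lemma hasDerivAt_eucl_comp {f : ℝ → EuclideanSpace ℝ (Fin n)} {f' : EuclideanSpace ℝ (Fin n)}
    {t : ℝ} (h : HasDerivAt f f' t) (i : Fin n) :
    HasDerivAt (fun t => f t i) (f' i) t := by
  exact (EuclideanSpace.proj i).hasFDerivAt.comp_hasDerivAt t h

lemma eucl_sum_single (y : EuclideanSpace ℝ (Fin n)) :
    y = ∑ k, y k • EuclideanSpace.single k (1:ℝ) := by
  apply (WithLp.linearEquiv 2 ℝ (Fin n → ℝ)).injective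
  rw [map_sum]
  funext i
  rw [Finset.sum_apply]
  simp only [_root_.map_smul, WithLp.linearEquiv_apply, EuclideanSpace.single, Equiv.apply_symm_apply]
  simp [Pi.single_apply]

lemma inner_eq_sum (x y : EuclideanSpace ℝ (Fin n)) : ⟪x, y⟫ = ∑ i, x i * y i := by
  simp [PiLp.inner_apply, RCLike.inner_apply, mul_comm]

lemma isUnit_det_of_pos {c : ℝ} (hc : 0 < c) (M : Matrix (Fin n) (Fin n) ℝ)
    (hpos : ∀ v : EuclideanSpace ℝ (Fin n), c * ‖v‖ ^ 2 ≤ ⟪v, (Matrix.toEuclideanLin M) v⟫) :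
    IsUnit M.det := by
  rw [← Matrix.isUnit_iff_isUnit_det, ← Matrix.mulVec_injective_iff_isUnit]
  intro u w huw
  have hz : M *ᵥ (u - w) = 0 := by
    rw [Matrix.mulVec_sub, huw, sub_self]
  set z : EuclideanSpace ℝ (Fin n) := (WithLp.equiv 2 (Fin n → ℝ)).symm (u - w) with hzdef
  have h0 : (Matrix.toEuclideanLin M) z = 0 := by
    rw [hzdef, WithLp.equiv_symm_apply, Matrix.toEuclideanLin_apply_piLp_toLp, hz]
    simp
  have hpz := hpos z
  rw [h0, inner_zero_right] at hpz
  have hznorm : ‖z‖ = 0 := by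
    by_contra h
    have hpos' : 0 < ‖z‖ := lt_of_le_of_ne (norm_nonneg z) (Ne.symm h)
    nlinarith [mul_pos hc (pow_pos hpos' 2)]
  have hz0 : z = 0 := norm_eq_zero.mp hznorm
  have huw0 : u - w = 0 := by
    simpa [hzdef] using congrArg (WithLp.equiv 2 (Fin n → ℝ)) hz0
  exact sub_eq_zero.mp huw0

lemma toEuclideanLin_inv_cancel {M : Matrix (Fin n) (Fin n) ℝ} (h : IsUnit M.det)
    (y : EuclideanSpace ℝ (Fin n)) :
    (Matrix.toEuclideanLin M) ((Matrix.toEuclideanLin M⁻¹) y) = y := by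
  have hmul : M * M⁻¹ = 1 := Matrix.mul_nonsing_inv _ h
  rw [Matrix.toEuclideanLin_apply, Matrix.toEuclideanLin_apply]
  simp [Matrix.mulVec_mulVec, hmul]

lemma toEuclideanLin_comp_apply (x : EuclideanSpace ℝ (Fin n))
    (M : Matrix (Fin n) (Fin n) ℝ) (i : Fin n) :
    (Matrix.toEuclideanLin M) x i = ∑ j, M i j * x j := by
  rw [Matrix.toEuclideanLin_apply]
  simp [Matrix.mulVec, dotProduct]

end KineticAux

set_option maxHeartbeats 1000000 in
theorem exact_dynamics_kinetic_bound
    (d n : ℕ) (hd : 1 ≤ d) (hn : 1 ≤ n)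
    (tf : ℝ) (htf : 0 < tf)
    (U : EuclideanSpace ℝ (Fin d) → ℝ) (hU : ContDiff ℝ 2 U)
    (Umin : ℝ) (hUbd : ∀ r, Umin ≤ U r)
    (b : EuclideanSpace ℝ (Fin d) → EuclideanSpace ℝ (Fin n))
    (B : ℝ) (hbbd : ∀ r, ‖b r‖ ≤ B)
    (A : EuclideanSpace ℝ (Fin d) → Matrix (Fin n) (Fin n) ℝ)
    (hA : ContDiff ℝ 1 A) (hb : ContDiff ℝ 1 b)
    (hAsymm : ∀ r, (A r).IsSymm)
    (c : ℝ) (hc : 0 < c)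
    (hApos : ∀ (r : EuclideanSpace ℝ (Fin d)) (v : EuclideanSpace ℝ (Fin n)),
      c * ‖v‖ ^ 2 ≤ ⟪v, (Matrix.toEuclideanLin (A r)) v⟫)
    -- r⋆ is a C² solution of the exact dynamics on [0, t_f]
    (rs : ℝ → EuclideanSpace ℝ (Fin d))
    (hrs : ContDiff ℝ 2 rs)
    (hode : ∀ t ∈ Icc (0:ℝ) tf,
      deriv (deriv rs) t
        = -gradient U (rs t) - gradQ A b (rs t)
            ((Matrix.toEuclideanLin (A (rs t))⁻¹) (b (rs t))))
    -- the initial energy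
    (E₀ : ℝ)
    (hE₀ : E₀ = (1/2) * ‖deriv rs 0‖ ^ 2 + U (rs 0)
        - (1/2) * ⟪b (rs 0), (Matrix.toEuclideanLin (A (rs 0))⁻¹) (b (rs 0))⟫) :
    ∀ t ∈ Icc (0:ℝ) tf,
      (1/2) * ‖deriv rs t‖ ^ 2 ≤ E₀ - Umin + B ^ 2 / (2 * c) := by
  classical
  have hB0 : 0 ≤ B := le_trans (norm_nonneg _) (hbbd 0)
  have hrs2 : ContDiff ℝ ((1:ℕ) + 1) rs := by exact_mod_cast hrs
  have hrs1 : Differentiable ℝ rs := hrs2.differentiable (by norm_num)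
  have hdrs : ContDiff ℝ (1:ℕ) (deriv rs) := (contDiff_succ_iff_deriv.mp hrs2).2.2
  have hdrs1 : Differentiable ℝ (deriv rs) := hdrs.differentiable (by norm_num)
  have hAdiff : Differentiable ℝ A := hA.differentiable (by norm_num)
  have hbdiff : Differentiable ℝ b := hb.differentiable (by norm_num)
  have hUdiff : Differentiable ℝ U := hU.differentiable (by norm_num)
  -- abbreviations
  set m : ℝ → Matrix (Fin n) (Fin n) ℝ := fun t => A (rs t) with hm_def
  set β : ℝ → EuclideanSpace ℝ (Fin n) := fun t => b (rs t) with hβ_def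
  set x : ℝ → EuclideanSpace ℝ (Fin n) := fun t => (Matrix.toEuclideanLin (m t)⁻¹) (β t) with hx_def
  set E : ℝ → ℝ := fun t => (1/2) * ∑ i, (deriv rs t i)^2 + U (rs t)
      - (1/2) * ∑ i, β t i * x t i with hE_def
  have hdetA : ∀ r, IsUnit (A r).det := fun r => KineticAux.isUnit_det_of_pos hc (A r) (hApos r)
  have hconstraint : ∀ t, (Matrix.toEuclideanLin (m t)) (x t) = β t :=
    fun t => KineticAux.toEuclideanLin_inv_cancel (hdetA (rs t)) (β t)
  -- pointwise derivatives
  have hvt : ∀ t, HasDerivAt rs (deriv rs t) t := fun t => (hrs1 t).hasDerivAt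
  have hat : ∀ t, HasDerivAt (deriv rs) (deriv (deriv rs) t) t := fun t => (hdrs1 t).hasDerivAt
  have hmt : ∀ t, HasDerivAt m (fderiv ℝ A (rs t) (deriv rs t)) t := by
    intro t
    exact (hAdiff (rs t)).hasFDerivAt.comp_hasDerivAt t (hvt t)
  have hβt : ∀ t, HasDerivAt β (fderiv ℝ b (rs t) (deriv rs t)) t := by
    intro t
    exact (hbdiff (rs t)).hasFDerivAt.comp_hasDerivAt t (hvt t)
  have hmij : ∀ t i j, HasDerivAt (fun s => m s i j) (fderiv ℝ A (rs t) (deriv rs t) i j) t :=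
    fun t i j => KineticAux.hasDerivAt_entry (hmt t) i j
  have hβi : ∀ t i, HasDerivAt (fun s => β s i) (fderiv ℝ b (rs t) (deriv rs t) i) t :=
    fun t i => KineticAux.hasDerivAt_eucl_comp (hβt t) i
  have hwij : ∀ t i j, DifferentiableAt ℝ (fun s => (m s)⁻¹ i j) t := by
    intro t i j
    exact KineticAux.differentiableAt_inv_entry (fun i j => (hmij t i j).differentiableAt)
      (hdetA (rs t)).ne_zero i j
  have hxi_eq : ∀ i, (fun s => x s i) = fun s => ∑ j, (m s)⁻¹ i j * β s j := by
    intro i; funext s; exact KineticAux.toEuclideanLin_comp_apply (β s) (m s)⁻¹ i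
  have hxi : ∀ t i, DifferentiableAt ℝ (fun s => x s i) t := by
    intro t i; rw [hxi_eq i]
    exact DifferentiableAt.fun_sum fun j _ => (hwij t i j).mul (hβi t j).differentiableAt
  -- differentiated constraint
  have hkey : ∀ t i, ∑ j, (fderiv ℝ A (rs t) (deriv rs t) i j * x t j
        + m t i j * deriv (fun s => x s j) t) = fderiv ℝ b (rs t) (deriv rs t) i := by
    intro t i
    have h1 : HasDerivAt (fun s => ∑ j, m s i j * x s j)
        (∑ j, (fderiv ℝ A (rs t) (deriv rs t) i j * x t j
          + m t i j * deriv (fun s => x s j) t)) t :=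
      HasDerivAt.fun_sum fun j _ => (hmij t i j).mul ((hxi t j).hasDerivAt)
    have h2 : (fun s => ∑ j, m s i j * x s j) = fun s => β s i := by
      funext s
      have := congrArg (fun y : EuclideanSpace ℝ (Fin n) => y i) (hconstraint s)
      simpa [KineticAux.toEuclideanLin_comp_apply] using this
    rw [h2] at h1
    exact h1.unique (hβi t i)
  -- gradient identity
  have hgradU : ∀ r y, fderiv ℝ U r y = ⟪gradient U r, y⟫ := by
    intro r y
    have h := (hUdiff r).hasGradientAt
    rw [hasGradientAt_iff_hasFDerivAt] at h
    rw [h.fderiv]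
    rfl
  -- energy has derivative W t everywhere
  have hEderiv : ∀ t, HasDerivAt E
      ((1/2) * ∑ i, (deriv (deriv rs) t i * deriv rs t i + deriv rs t i * deriv (deriv rs) t i)
        + fderiv ℝ U (rs t) (deriv rs t)
        - (1/2) * ∑ i, (fderiv ℝ b (rs t) (deriv rs t) i * x t i
            + β t i * deriv (fun s => x s i) t)) t := by
    intro t
    have h1 : HasDerivAt (fun s => ∑ i, (deriv rs s i)^2)
        (∑ i, (deriv (deriv rs) t i * deriv rs t i + deriv rs t i * deriv (deriv rs) t i)) t := by
      apply HasDerivAt.fun_sum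
      intro i _
      have hvi := KineticAux.hasDerivAt_eucl_comp (hat t) i
      simpa [pow_two] using hvi.fun_mul hvi
    have h2 : HasDerivAt (fun s => U (rs s)) (fderiv ℝ U (rs t) (deriv rs t)) t := by
      exact (hUdiff (rs t)).hasFDerivAt.comp_hasDerivAt t (hvt t)
    have h3 : HasDerivAt (fun s => ∑ i, β s i * x s i)
        (∑ i, (fderiv ℝ b (rs t) (deriv rs t) i * x t i + β t i * deriv (fun s => x s i) t)) t :=
      HasDerivAt.fun_sum fun i _ => (hβi t i).mul (hxi t i).hasDerivAt
    have h4 := ((h1.const_mul (1/2:ℝ)).add h2).sub (h3.const_mul (1/2:ℝ))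
    rw [hE_def]
    exact h4
  have hEdiff : ∀ t, DifferentiableAt ℝ E t := fun t => (hEderiv t).differentiableAt
  have hconstraint_comp : ∀ s i, β s i = ∑ j, m s i j * x s j := by
    intro s i
    have h := congrArg (fun y : EuclideanSpace ℝ (Fin n) => y i) (hconstraint s)
    simpa [KineticAux.toEuclideanLin_comp_apply] using h.symm
  have hE0 : ∀ t ∈ Icc (0:ℝ) tf, HasDerivAt E 0 t := by
    intro t ht
    have p1 : ∑ i, (deriv (deriv rs) t i * deriv rs t i + deriv rs t i * deriv (deriv rs) t i)
        = 2 * ⟪deriv rs t, deriv (deriv rs) t⟫ := by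
      rw [KineticAux.inner_eq_sum, Finset.mul_sum]
      exact Finset.sum_congr rfl fun i _ => by ring
    have p2 : ⟪deriv rs t, deriv (deriv rs) t⟫
        = -⟪deriv rs t, gradient U (rs t)⟫ - ⟪deriv rs t, gradQ A b (rs t) (x t)⟫ := by
      rw [hode t ht]
      have hox : (Matrix.toEuclideanLin (A (rs t))⁻¹) (b (rs t)) = x t := rfl
      rw [hox, inner_sub_right, inner_neg_right]
    have hAdec : fderiv ℝ A (rs t) (deriv rs t)
        = ∑ k, deriv rs t k • fderiv ℝ A (rs t) (EuclideanSpace.single k 1) := by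
      conv_lhs => rw [KineticAux.eucl_sum_single (deriv rs t)]
      rw [map_sum]
      simp
    have hbdec : fderiv ℝ b (rs t) (deriv rs t)
        = ∑ k, deriv rs t k • fderiv ℝ b (rs t) (EuclideanSpace.single k 1) := by
      conv_lhs => rw [KineticAux.eucl_sum_single (deriv rs t)]
      rw [map_sum]
      simp
    have claimA : ∑ k, deriv rs t k *
          ⟪x t, (Matrix.toEuclideanLin (fderiv ℝ A (rs t) (EuclideanSpace.single k 1))) (x t)⟫
        = ⟪x t, (Matrix.toEuclideanLin (fderiv ℝ A (rs t) (deriv rs t))) (x t)⟫ := by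
      rw [hAdec, map_sum, LinearMap.sum_apply, inner_sum]
      refine Finset.sum_congr rfl fun k _ => ?_
      rw [_root_.map_smul, LinearMap.smul_apply]
      exact (real_inner_smul_right _ _ _).symm
    have claimB : ∑ k, deriv rs t k * ⟪fderiv ℝ b (rs t) (EuclideanSpace.single k 1), x t⟫
        = ⟪fderiv ℝ b (rs t) (deriv rs t), x t⟫ := by
      rw [hbdec, sum_inner]
      refine Finset.sum_congr rfl fun k _ => ?_
      exact (real_inner_smul_left _ _ _).symm
    have p3 : ⟪deriv rs t, gradQ A b (rs t) (x t)⟫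
        = (1/2) * ⟪x t, (Matrix.toEuclideanLin (fderiv ℝ A (rs t) (deriv rs t))) (x t)⟫
          - ⟪fderiv ℝ b (rs t) (deriv rs t), x t⟫ := by
      rw [KineticAux.inner_eq_sum]
      have hcomp : ∀ k : Fin d, gradQ A b (rs t) (x t) k
          = (1/2) * ⟪x t, (Matrix.toEuclideanLin (fderiv ℝ A (rs t) (EuclideanSpace.single k 1))) (x t)⟫
            - ⟪fderiv ℝ b (rs t) (EuclideanSpace.single k 1), x t⟫ := fun k => rfl
      rw [← claimA, ← claimB, Finset.mul_sum, ← Finset.sum_sub_distrib]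
      refine Finset.sum_congr rfl fun k _ => ?_
      rw [hcomp k]
      ring
    have hsymm : ∀ i j, m t i j = m t j i := fun i j => (hAsymm (rs t)).apply j i
    have p4 : ∑ i, β t i * deriv (fun s => x s i) t
        = ⟪x t, fderiv ℝ b (rs t) (deriv rs t)⟫
          - ⟪x t, (Matrix.toEuclideanLin (fderiv ℝ A (rs t) (deriv rs t))) (x t)⟫ := by
      calc ∑ i, β t i * deriv (fun s => x s i) t
          = ∑ i, (∑ j, m t j i * x t j) * deriv (fun s => x s i) t := by
            refine Finset.sum_congr rfl fun i _ => ?_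
            have hbi : β t i = ∑ j, m t j i * x t j := by
              rw [hconstraint_comp t i]
              exact Finset.sum_congr rfl fun j _ => by rw [hsymm i j]
            rw [hbi]
        _ = ∑ j, x t j * (∑ i, m t j i * deriv (fun s => x s i) t) := by
            simp_rw [Finset.sum_mul]
            rw [Finset.sum_comm]
            refine Finset.sum_congr rfl fun j _ => ?_
            rw [Finset.mul_sum]
            exact Finset.sum_congr rfl fun i _ => by ring
        _ = ∑ j, x t j * (fderiv ℝ b (rs t) (deriv rs t) j
              - ∑ i, fderiv ℝ A (rs t) (deriv rs t) j i * x t i) := by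
            refine Finset.sum_congr rfl fun j _ => ?_
            congr 1
            have hk := hkey t j
            rw [Finset.sum_add_distrib] at hk
            linarith
        _ = ⟪x t, fderiv ℝ b (rs t) (deriv rs t)⟫
              - ⟪x t, (Matrix.toEuclideanLin (fderiv ℝ A (rs t) (deriv rs t))) (x t)⟫ := by
            rw [KineticAux.inner_eq_sum, KineticAux.inner_eq_sum, ← Finset.sum_sub_distrib]
            refine Finset.sum_congr rfl fun j _ => ?_
            rw [KineticAux.toEuclideanLin_comp_apply (x t) (fderiv ℝ A (rs t) (deriv rs t))]
            ring
    have p5 : ∑ i, fderiv ℝ b (rs t) (deriv rs t) i * x t i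
        = ⟪fderiv ℝ b (rs t) (deriv rs t), x t⟫ := (KineticAux.inner_eq_sum _ _).symm
    have p6 : fderiv ℝ U (rs t) (deriv rs t) = ⟪gradient U (rs t), deriv rs t⟫ := hgradU _ _
    have c1 : ⟪gradient U (rs t), deriv rs t⟫ = ⟪deriv rs t, gradient U (rs t)⟫ :=
      real_inner_comm _ _
    have c2 : ⟪x t, fderiv ℝ b (rs t) (deriv rs t)⟫ = ⟪fderiv ℝ b (rs t) (deriv rs t), x t⟫ :=
      real_inner_comm _ _
    have hsplit : ∑ i, (fderiv ℝ b (rs t) (deriv rs t) i * x t i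
          + β t i * deriv (fun s => x s i) t)
        = (∑ i, fderiv ℝ b (rs t) (deriv rs t) i * x t i)
          + ∑ i, β t i * deriv (fun s => x s i) t := Finset.sum_add_distrib
    have hval : (1/2) * ∑ i, (deriv (deriv rs) t i * deriv rs t i
            + deriv rs t i * deriv (deriv rs) t i)
        + fderiv ℝ U (rs t) (deriv rs t)
        - (1/2) * ∑ i, (fderiv ℝ b (rs t) (deriv rs t) i * x t i
            + β t i * deriv (fun s => x s i) t) = 0 := by
      rw [p1, hsplit, p4, p5, p6]
      linarith [p2, p3, c1, c2]
    have h := hEderiv t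
    rw [hval] at h
    exact h
  have hconst : ∀ s ∈ Icc (0:ℝ) tf, E s = E 0 := by
    apply constant_of_has_deriv_right_zero
    · exact fun s _ => (hEdiff s).continuousAt.continuousWithinAt
    · intro s hs
      exact (hE0 s ⟨hs.1, le_of_lt hs.2⟩).hasDerivWithinAt
  intro t ht
  have hnormd : ∀ (y : EuclideanSpace ℝ (Fin d)), ‖y‖^2 = ∑ i, (y i)^2 := by
    intro y
    rw [← real_inner_self_eq_norm_sq, KineticAux.inner_eq_sum]
    exact Finset.sum_congr rfl fun i _ => (pow_two _).symm
  have hE0val : E 0 = E₀ := by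
    have hinner0 : ⟪b (rs 0), (Matrix.toEuclideanLin (A (rs 0))⁻¹) (b (rs 0))⟫
        = ∑ i, β 0 i * x 0 i := by
      rw [show (Matrix.toEuclideanLin (A (rs 0))⁻¹) (b (rs 0)) = x 0 from rfl,
        show b (rs 0) = β 0 from rfl, KineticAux.inner_eq_sum]
    rw [hE₀, hnormd (deriv rs 0), hinner0, hE_def]
  have hEt : E t = E₀ := (hconst t ht).trans hE0val
  have hQ : ∑ i, β t i * x t i ≤ B^2 / c := by
    have hsum : ∑ i, β t i * x t i = ⟪β t, x t⟫ := (KineticAux.inner_eq_sum _ _).symm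
    rw [hsum]
    have h1 : c * ‖x t‖^2 ≤ ⟪x t, (Matrix.toEuclideanLin (m t)) (x t)⟫ := hApos (rs t) (x t)
    rw [hconstraint t] at h1
    have h2 : ⟪x t, β t⟫ = ⟪β t, x t⟫ := real_inner_comm _ _
    have h3 : ⟪β t, x t⟫ ≤ ‖β t‖ * ‖x t‖ := real_inner_le_norm _ _
    have h4 : ‖β t‖ ≤ B := hbbd (rs t)
    rw [h2] at h1
    have h5 : ⟪β t, x t⟫ ≤ B * ‖x t‖ :=
      le_trans h3 (mul_le_mul_of_nonneg_right h4 (norm_nonneg _))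
    by_cases hx0 : ‖x t‖ = 0
    · have h6 : ⟪β t, x t⟫ ≤ 0 := by
        calc ⟪β t, x t⟫ ≤ B * ‖x t‖ := h5
          _ = 0 := by rw [hx0, mul_zero]
      have h7 : (0:ℝ) ≤ B^2/c := by positivity
      linarith
    · have hxpos : 0 < ‖x t‖ := lt_of_le_of_ne (norm_nonneg _) (Ne.symm hx0)
      have h6 : c * ‖x t‖ ≤ B := by
        have h7 := le_trans h1 h5
        by_contra hcon
        push_neg at hcon
        nlinarith
      rw [le_div_iff₀ hc]
      nlinarith [mul_le_mul_of_nonneg_right h6 hB0, mul_le_mul_of_nonneg_right h5 hc.le]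
  have hU' := hUbd (rs t)
  have hhalf : B^2/(2*c) = (B^2/c)/2 := by ring
  simp only [hE_def] at hEt
  rw [hnormd (deriv rs t)]
  linarith [hEt, hE0val, hQ, hU']


end
end

section
/- There exists a constant C > 0, depending only on n, c, C₀, t_f (and in particular independent of ε, s, η₀, ξ₀), such that for every ε ∈ (0,1], every s ∈ [0,t_f], every η₀, ξ₀ ∈ ℝ^n, and every t ∈ [s,t_f], the solution ỹ of the homogeneous system satisfies |ỹ(t)| ≤ C(|η₀| + ε^{1/2}|ξ₀|) and |ỹ'(t)| ≤ C(ε^{−1/2}|η₀| + |ξ₀|). -/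
/- Bounds on the flow map of the homogeneous singularly perturbed linear system
ε·ỹ'' = −A(t)·ỹ, with a constant depending only on n, c, C₀, t_f. -/

open scoped RealInnerProductSpace
open Set

noncomputable section

attribute [local instance] Matrix.normedAddCommGroup Matrix.normedSpace

private lemma sq_le_imp_le_sqrt_mul {x R b : ℝ} (hx : 0 ≤ x) (hR : 0 ≤ R) (hb : 0 ≤ b)
    (h : x ^ 2 ≤ R * b ^ 2) : x ≤ Real.sqrt R * b := by
  have := Real.sqrt_le_sqrt h
  rwa [Real.sqrt_sq hx, Real.sqrt_mul hR, Real.sqrt_sq hb] at this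

set_option maxHeartbeats 2000000 in
theorem homogeneous_flow_map_bounds
    (n : ℕ) (hn : 1 ≤ n)
    (tf : ℝ) (htf : 0 < tf)
    (c C₀ : ℝ) (hc : 0 < c) (hC₀ : 0 < C₀) :
    -- the constant C depends only on n, c, C₀, t_f
    ∃ C > 0, ∀ A : ℝ → Matrix (Fin n) (Fin n) ℝ,
      ContDiff ℝ 1 A →
      (∀ t ∈ Icc (0:ℝ) tf, (A t).IsSymm) →
      (∀ t ∈ Icc (0:ℝ) tf, ∀ v : EuclideanSpace ℝ (Fin n),
        c * ‖v‖ ^ 2 ≤ ⟪v, (Matrix.toEuclideanLin (A t)) v⟫) →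
      (∀ t ∈ Icc (0:ℝ) tf,
        ‖Matrix.toEuclideanCLM (𝕜 := ℝ) (A t)‖
          + ‖Matrix.toEuclideanCLM (𝕜 := ℝ) (deriv A t)‖ ≤ C₀) →
      ∀ ε ∈ Ioc (0:ℝ) 1, ∀ s ∈ Icc (0:ℝ) tf,
      ∀ (η₀ ξ₀ : EuclideanSpace ℝ (Fin n)) (y : ℝ → EuclideanSpace ℝ (Fin n)),
      -- y is the C² solution of the homogeneous system with data (s, η₀, ξ₀)
      ContDiff ℝ 2 y →
      (∀ t ∈ Icc s tf,
        ε • deriv (deriv y) t = -(Matrix.toEuclideanLin (A t)) (y t)) →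
      y s = η₀ → deriv y s = ξ₀ →
      ∀ t ∈ Icc s tf,
        ‖y t‖ ≤ C * (‖η₀‖ + Real.sqrt ε * ‖ξ₀‖) ∧
        ‖deriv y t‖ ≤ C * ((Real.sqrt ε)⁻¹ * ‖η₀‖ + ‖ξ₀‖) := by
  set K : ℝ := C₀ / c with hKdef
  have hK0 : 0 ≤ K := div_nonneg hC₀.le hc.le
  set R : ℝ := Real.exp (K * tf) * max C₀ 1 * max c⁻¹ 1 with hRdef
  have hR0 : 0 < R := by positivity
  refine ⟨Real.sqrt R + 1, by positivity, ?_⟩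
  intro A hA hsymm hcoer hbound ε hε s hs η₀ ξ₀ y hy hode hys hys'
  obtain ⟨hε0, hε1⟩ := hε
  obtain ⟨hs0, hstf⟩ := hs
  -- the matrix family as continuous linear maps
  set B : ℝ → (EuclideanSpace ℝ (Fin n) →L[ℝ] EuclideanSpace ℝ (Fin n)) :=
    fun t => Matrix.toEuclideanCLM (𝕜 := ℝ) (A t) with hBdef
  set B' : ℝ → (EuclideanSpace ℝ (Fin n) →L[ℝ] EuclideanSpace ℝ (Fin n)) :=
    fun t => Matrix.toEuclideanCLM (𝕜 := ℝ) (deriv A t) with hB'def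
  have hBderiv : ∀ t : ℝ, HasDerivAt B (B' t) t := by
    intro t
    let L : Matrix (Fin n) (Fin n) ℝ →ₗ[ℝ]
        (EuclideanSpace ℝ (Fin n) →L[ℝ] EuclideanSpace ℝ (Fin n)) :=
      { toFun := fun M => Matrix.toEuclideanCLM (𝕜 := ℝ) M,
        map_add' := fun M N => map_add _ M N,
        map_smul' := fun r M => map_smul _ r M }
    exact (LinearMap.toContinuousLinearMap L).hasFDerivAt.comp_hasDerivAt t
      ((hA.differentiable one_ne_zero t).hasDerivAt)
  -- symmetry of B t
  have hBsym : ∀ t ∈ Icc (0:ℝ) tf, ∀ u v : EuclideanSpace ℝ (Fin n),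
      ⟪B t u, v⟫ = ⟪u, B t v⟫ := by
    intro t ht u v
    have hsa : IsSelfAdjoint (B t) := by
      have hst : star (A t) = A t := by
        rw [Matrix.star_eq_conjTranspose, Matrix.conjTranspose_eq_transpose_of_trivial]
        exact hsymm t ht
      rw [hBdef]
      simp only
      rw [IsSelfAdjoint, ← map_star, hst]
    exact hsa.isSymmetric u v
  -- differentiability of y
  have hy2 : Differentiable ℝ y ∧ Differentiable ℝ (deriv y) := by
    rw [show (2 : WithTop ℕ∞) = 1 + 1 from rfl, contDiff_succ_iff_deriv] at hy
    exact ⟨hy.1, hy.2.2.differentiable one_ne_zero⟩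
  have hy1 : ∀ t, HasDerivAt y (deriv y t) t := fun t => (hy2.1 t).hasDerivAt
  have hy1' : ∀ t, HasDerivAt (deriv y) (deriv (deriv y) t) t := fun t => (hy2.2 t).hasDerivAt
  -- the energy
  set E : ℝ → ℝ := fun t => ⟪y t, B t (y t)⟫ + ε * ⟪deriv y t, deriv y t⟫ with hEdef
  set D : ℝ → ℝ := fun t =>
    (⟪y t, B' t (y t) + B t (deriv y t)⟫ + ⟪deriv y t, B t (y t)⟫)
      + ε * (⟪deriv y t, deriv (deriv y) t⟫ + ⟪deriv (deriv y) t, deriv y t⟫) with hDdef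
  have hE : ∀ t, HasDerivAt E (D t) t := by
    intro t
    exact ((HasDerivAt.inner ℝ (hy1 t) ((hBderiv t).clm_apply (hy1 t)))).add
      ((HasDerivAt.inner ℝ (hy1' t) (hy1' t)).const_mul ε)
  -- nonnegativity / lower bounds on the energy
  have hcoer' : ∀ t ∈ Icc s tf, c * ‖y t‖ ^ 2 ≤ ⟪y t, B t (y t)⟫ := by
    intro t ht
    exact hcoer t ⟨hs0.trans ht.1, ht.2⟩ (y t)
  have hself : ∀ v : EuclideanSpace ℝ (Fin n), ⟪v, v⟫ = ‖v‖ ^ 2 := fun v => by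
    rw [real_inner_self_eq_norm_sq]
  have hElower : ∀ t ∈ Icc s tf, c * ‖y t‖ ^ 2 ≤ E t ∧ ε * ‖deriv y t‖ ^ 2 ≤ E t := by
    intro t ht
    have h1 := hcoer' t ht
    have h2 : (0:ℝ) ≤ ε * ‖deriv y t‖ ^ 2 := by positivity
    have h3 : (0:ℝ) ≤ c * ‖y t‖ ^ 2 := by positivity
    rw [hEdef]
    simp only [hself]
    constructor <;> nlinarith
  have hEnonneg : ∀ t ∈ Icc s tf, 0 ≤ E t := by
    intro t ht
    have := (hElower t ht).1
    nlinarith [sq_nonneg ‖y t‖, hc]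
  -- on [s, tf), the derivative of the energy simplifies
  have hDeq : ∀ t ∈ Ico s tf, D t = ⟪y t, B' t (y t)⟫ := by
    intro t ht
    have ht' : t ∈ Icc s tf := ⟨ht.1, ht.2.le⟩
    have ht0 : t ∈ Icc (0:ℝ) tf := ⟨hs0.trans ht.1, ht.2.le⟩
    have hodet : ε • deriv (deriv y) t = -(B t (y t)) := hode t ht'
    have h1 : ε * ⟪deriv (deriv y) t, deriv y t⟫ = -⟪B t (y t), deriv y t⟫ := by
      rw [← real_inner_smul_left, hodet, inner_neg_left]
    have h2 : ε * ⟪deriv y t, deriv (deriv y) t⟫ = -⟪B t (y t), deriv y t⟫ := by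
      rw [real_inner_comm, h1]
    have h3 : ⟪y t, B t (deriv y t)⟫ = ⟪B t (y t), deriv y t⟫ :=
      (hBsym t ht0 (y t) (deriv y t)).symm
    have h4 : ⟪deriv y t, B t (y t)⟫ = ⟪B t (y t), deriv y t⟫ := real_inner_comm _ _
    rw [hDdef]
    simp only [inner_add_right]
    rw [h3, h4]
    nlinarith [h1, h2]
  -- the Grönwall bound for the energy
  have hbound' : ∀ t ∈ Ico s tf, ‖D t‖ ≤ K * ‖E t‖ + 0 := by
    intro t ht
    have ht' : t ∈ Icc s tf := ⟨ht.1, ht.2.le⟩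
    have ht0 : t ∈ Icc (0:ℝ) tf := ⟨hs0.trans ht.1, ht.2.le⟩
    rw [hDeq t ht]
    have hB'n : ‖B' t‖ ≤ C₀ := by
      have := hbound t ht0
      have h1 : (0:ℝ) ≤ ‖Matrix.toEuclideanCLM (𝕜 := ℝ) (A t)‖ := norm_nonneg _
      rw [hB'def]; simp only; linarith
    have h5 : |⟪y t, B' t (y t)⟫| ≤ C₀ * ‖y t‖ ^ 2 := by
      calc |⟪y t, B' t (y t)⟫| ≤ ‖y t‖ * ‖B' t (y t)‖ := abs_real_inner_le_norm _ _
        _ ≤ ‖y t‖ * (‖B' t‖ * ‖y t‖) := by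
            exact mul_le_mul_of_nonneg_left ((B' t).le_opNorm (y t)) (norm_nonneg _)
        _ ≤ C₀ * ‖y t‖ ^ 2 := by nlinarith [norm_nonneg (y t), hB'n, norm_nonneg (B' t)]
    have h6 : c * ‖y t‖ ^ 2 ≤ E t := (hElower t ht').1
    have h7 : 0 ≤ E t := hEnonneg t ht'
    have h8 : K * (c * ‖y t‖ ^ 2) ≤ K * E t := mul_le_mul_of_nonneg_left h6 hK0
    have h9 : K * c = C₀ := by rw [hKdef]; exact div_mul_cancel₀ C₀ hc.ne'
    rw [Real.norm_eq_abs, Real.norm_eq_abs, abs_of_nonneg h7]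
    nlinarith [h5, h8]
  set δ : ℝ := C₀ * ‖η₀‖ ^ 2 + ε * ‖ξ₀‖ ^ 2 with hδdef
  have hEs : ‖E s‖ ≤ δ := by
    have hstf' : s ∈ Icc s tf := ⟨le_refl s, hstf⟩
    have h7 : 0 ≤ E s := hEnonneg s hstf'
    rw [Real.norm_eq_abs, abs_of_nonneg h7]
    have hBn : ‖B s‖ ≤ C₀ := by
      have := hbound s ⟨hs0, hstf⟩
      have h1 : (0:ℝ) ≤ ‖Matrix.toEuclideanCLM (𝕜 := ℝ) (deriv A s)‖ := norm_nonneg _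
      rw [hBdef]; simp only; linarith
    have h5 : ⟪y s, B s (y s)⟫ ≤ C₀ * ‖y s‖ ^ 2 := by
      calc ⟪y s, B s (y s)⟫ ≤ |⟪y s, B s (y s)⟫| := le_abs_self _
        _ ≤ ‖y s‖ * ‖B s (y s)‖ := abs_real_inner_le_norm _ _
        _ ≤ ‖y s‖ * (‖B s‖ * ‖y s‖) :=
            mul_le_mul_of_nonneg_left ((B s).le_opNorm (y s)) (norm_nonneg _)
        _ ≤ C₀ * ‖y s‖ ^ 2 := by nlinarith [norm_nonneg (y s), norm_nonneg (B s)]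
    rw [hEdef]
    simp only [hself, hys, hys', hδdef]
    rw [hys] at h5
    linarith
  have hgron : ∀ t ∈ Icc s tf, ‖E t‖ ≤ gronwallBound δ K 0 (t - s) :=
    norm_le_gronwallBound_of_norm_deriv_right_le
      (fun t _ => (hE t).continuousAt.continuousWithinAt)
      (fun t _ => (hE t).hasDerivWithinAt)
      hEs hbound'
  -- final estimates
  intro t ht
  have hEt : E t ≤ δ * Real.exp (K * tf) := by
    have h1 := hgron t ht
    rw [gronwallBound_ε0] at h1
    rw [Real.norm_eq_abs, abs_of_nonneg (hEnonneg t ht)] at h1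
    have h2 : Real.exp (K * (t - s)) ≤ Real.exp (K * tf) := by
      apply Real.exp_le_exp.mpr
      apply mul_le_mul_of_nonneg_left _ hK0
      have := ht.2; have := ht.1; linarith
    have hδ0 : 0 ≤ δ := by positivity
    calc E t ≤ δ * Real.exp (K * (t - s)) := h1
      _ ≤ δ * Real.exp (K * tf) := mul_le_mul_of_nonneg_left h2 hδ0
  obtain ⟨hlow1, hlow2⟩ := hElower t ht
  set a : ℝ := ‖η₀‖
  set b : ℝ := ‖ξ₀‖
  set e : ℝ := Real.sqrt ε with hedef
  have he0 : 0 < e := Real.sqrt_pos.mpr hε0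
  have he2 : e ^ 2 = ε := Real.sq_sqrt hε0.le
  have ha0 : 0 ≤ a := norm_nonneg _
  have hb0 : 0 ≤ b := norm_nonneg _
  have hmax1 : C₀ ≤ max C₀ 1 := le_max_left _ _
  have hmax2 : (1:ℝ) ≤ max C₀ 1 := le_max_right _ _
  have hmax3 : c⁻¹ ≤ max c⁻¹ 1 := le_max_left _ _
  have hmax4 : (1:ℝ) ≤ max c⁻¹ 1 := le_max_right _ _
  have hexp0 : 0 < Real.exp (K * tf) := Real.exp_pos _
  have hcross : a ^ 2 + ε * b ^ 2 ≤ (a + e * b) ^ 2 := by nlinarith [mul_nonneg ha0 (mul_nonneg he0.le hb0)]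
  have hδle : δ ≤ max C₀ 1 * (a ^ 2 + ε * b ^ 2) := by
    rw [hδdef]
    nlinarith [sq_nonneg a, mul_nonneg hε0.le (sq_nonneg b)]
  have hP2 : E t ≤ Real.exp (K * tf) * max C₀ 1 * (a ^ 2 + ε * b ^ 2) := by
    calc E t ≤ δ * Real.exp (K * tf) := hEt
      _ ≤ (max C₀ 1 * (a ^ 2 + ε * b ^ 2)) * Real.exp (K * tf) :=
          mul_le_mul_of_nonneg_right hδle hexp0.le
      _ = Real.exp (K * tf) * max C₀ 1 * (a ^ 2 + ε * b ^ 2) := by ring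
  constructor
  · -- position bound
    have hkey : ‖y t‖ ^ 2 ≤ R * (a + e * b) ^ 2 := by
      have h1 : c * ‖y t‖ ^ 2 ≤ Real.exp (K * tf) * max C₀ 1 * (a + e * b) ^ 2 := by
        calc c * ‖y t‖ ^ 2 ≤ E t := hlow1
          _ ≤ Real.exp (K * tf) * max C₀ 1 * (a ^ 2 + ε * b ^ 2) := hP2
          _ ≤ Real.exp (K * tf) * max C₀ 1 * (a + e * b) ^ 2 := by
              apply mul_le_mul_of_nonneg_left hcross
              positivity
      have h2 : ‖y t‖ ^ 2 ≤ c⁻¹ * (Real.exp (K * tf) * max C₀ 1 * (a + e * b) ^ 2) := by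
        rw [le_inv_mul_iff₀ hc]
        linarith
      calc ‖y t‖ ^ 2 ≤ c⁻¹ * (Real.exp (K * tf) * max C₀ 1 * (a + e * b) ^ 2) := h2
        _ ≤ max c⁻¹ 1 * (Real.exp (K * tf) * max C₀ 1 * (a + e * b) ^ 2) := by
            apply mul_le_mul_of_nonneg_right hmax3
            positivity
        _ = R * (a + e * b) ^ 2 := by rw [hRdef]; ring
    have := sq_le_imp_le_sqrt_mul (norm_nonneg (y t)) hR0.le
      (by positivity : (0:ℝ) ≤ a + e * b) hkey
    calc ‖y t‖ ≤ Real.sqrt R * (a + e * b) := this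
      _ ≤ (Real.sqrt R + 1) * (a + e * b) := by
          apply mul_le_mul_of_nonneg_right _ (by positivity)
          linarith
  · -- velocity bound
    have hkey : ‖deriv y t‖ ^ 2 ≤ R * (e⁻¹ * a + b) ^ 2 := by
      have heinv : ε * (e⁻¹ * a + b) ^ 2 = (a + e * b) ^ 2 := by
        have : e * (e⁻¹ * a + b) = a + e * b := by
          field_simp
        calc ε * (e⁻¹ * a + b) ^ 2 = (e * (e⁻¹ * a + b)) ^ 2 := by rw [mul_pow, he2]
          _ = (a + e * b) ^ 2 := by rw [this]
      have h1 : ε * ‖deriv y t‖ ^ 2 ≤ ε * (R * (e⁻¹ * a + b) ^ 2) := by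
        calc ε * ‖deriv y t‖ ^ 2 ≤ E t := hlow2
          _ ≤ Real.exp (K * tf) * max C₀ 1 * (a ^ 2 + ε * b ^ 2) := hP2
          _ ≤ Real.exp (K * tf) * max C₀ 1 * (a + e * b) ^ 2 := by
              apply mul_le_mul_of_nonneg_left hcross; positivity
          _ ≤ max c⁻¹ 1 * (Real.exp (K * tf) * max C₀ 1 * (a + e * b) ^ 2) := by
              nlinarith [mul_nonneg (mul_nonneg hexp0.le (le_trans zero_le_one hmax2))
                (sq_nonneg (a + e * b)), hmax4]
          _ = R * (a + e * b) ^ 2 := by rw [hRdef]; ring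
          _ = ε * (R * (e⁻¹ * a + b) ^ 2) := by rw [← heinv]; ring
      exact le_of_mul_le_mul_left h1 hε0
    have := sq_le_imp_le_sqrt_mul (norm_nonneg (deriv y t)) hR0.le
      (by positivity : (0:ℝ) ≤ e⁻¹ * a + b) hkey
    calc ‖deriv y t‖ ≤ Real.sqrt R * (e⁻¹ * a + b) := this
      _ ≤ (Real.sqrt R + 1) * (e⁻¹ * a + b) := by
          apply mul_le_mul_of_nonneg_right _ (by positivity)
          linarith

end
end

section
/- Let T > 0, n ≥ 1, and c, C₀ > 0. Let κ : [0,T] → ℝ be C² with κ'(t) ≥ c and |κ'(t)| + |κ''(t)| ≤ C₀ for all t, and let g : [0,T] → ℝ^n be C¹ with |g(t)| + |g'(t)| ≤ C₀ for all t. Then there exists C > 0 depending only on c, C₀, T, n such that for every ε ∈ (0,1] and every t ∈ [0,T]: |∫₀^t sin((κ(t)−κ(s))/ε^{1/2})·g(s) ds| ≤ C·ε^{1/2} and |∫₀^t cos((κ(t)−κ(s))/ε^{1/2})·g(s) ds| ≤ C·ε^{1/2}. -/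
/- O(√ε) bounds for oscillatory integrals with nondegenerate phase. -/

open Set

noncomputable section

open intervalIntegral

lemma osc_aux {n : ℕ} (T c C₀ : ℝ) (hT : 0 < T) (hc : 0 < c) (hC₀ : 0 < C₀)
    (κ : ℝ → ℝ) (hκ : ContDiff ℝ 2 κ)
    (hκ1 : ∀ s ∈ Icc (0:ℝ) T, c ≤ deriv κ s)
    (hκ2 : ∀ s ∈ Icc (0:ℝ) T, |deriv κ s| + |deriv (deriv κ) s| ≤ C₀)
    (g : ℝ → EuclideanSpace ℝ (Fin n)) (hg : ContDiff ℝ 1 g)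
    (hgb : ∀ s ∈ Icc (0:ℝ) T, ‖g s‖ + ‖deriv g s‖ ≤ C₀)
    (σ : ℝ) (hσ : 0 < σ)
    (u w : ℝ → ℝ) (hw : Continuous w)
    (hu : ∀ x, HasDerivAt u (w x * (deriv κ x / σ)) x)
    (hub : ∀ x, |u x| ≤ 1)
    (t : ℝ) (ht : t ∈ Icc 0 T) :
    ‖∫ s in (0:ℝ)..t, w s • g s‖ ≤ (2 * C₀ / c + T * (C₀ ^ 2 / c ^ 2 + C₀ / c)) * σ := by
  have h2 : ContDiff ℝ ((1:ℕ) + 1) κ := by exact_mod_cast hκ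
  have hκdiff : Differentiable ℝ κ := (contDiff_succ_iff_deriv.mp h2).1
  have hκ' : ContDiff ℝ 1 (deriv κ) := by exact_mod_cast (contDiff_succ_iff_deriv.mp h2).2.2
  have hκ'diff : Differentiable ℝ (deriv κ) := (contDiff_one_iff_deriv.mp hκ').1
  have hκ''cont : Continuous (deriv (deriv κ)) := (contDiff_one_iff_deriv.mp hκ').2
  have hgdiff : Differentiable ℝ g := (contDiff_one_iff_deriv.mp hg).1
  have hg'cont : Continuous (deriv g) := (contDiff_one_iff_deriv.mp hg).2
  have huIcc : uIcc (0:ℝ) t = Icc 0 t := uIcc_of_le ht.1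
  have hsub : Icc (0:ℝ) t ⊆ Icc 0 T := Icc_subset_Icc le_rfl ht.2
  have hκpos : ∀ x ∈ Icc (0:ℝ) T, (0:ℝ) < deriv κ x := fun x hx => lt_of_lt_of_le hc (hκ1 x hx)
  have hκne : ∀ x ∈ Icc (0:ℝ) T, deriv κ x ≠ 0 := fun x hx => (hκpos x hx).ne'
  -- bounds
  have hb1 : ∀ x ∈ Icc (0:ℝ) T, |deriv κ x| ≤ C₀ := fun x hx =>
    le_trans (le_add_of_nonneg_right (abs_nonneg _)) (hκ2 x hx)
  have hb2 : ∀ x ∈ Icc (0:ℝ) T, |deriv (deriv κ) x| ≤ C₀ := fun x hx =>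
    le_trans (le_add_of_nonneg_left (abs_nonneg _)) (hκ2 x hx)
  have hb3 : ∀ x ∈ Icc (0:ℝ) T, ‖g x‖ ≤ C₀ := fun x hx =>
    le_trans (le_add_of_nonneg_right (norm_nonneg _)) (hgb x hx)
  have hb4 : ∀ x ∈ Icc (0:ℝ) T, ‖deriv g x‖ ≤ C₀ := fun x hx =>
    le_trans (le_add_of_nonneg_left (norm_nonneg _)) (hgb x hx)
  set v : ℝ → EuclideanSpace ℝ (Fin n) := fun x => (σ * (deriv κ x)⁻¹) • g x with hv
  set v' : ℝ → EuclideanSpace ℝ (Fin n) := fun x =>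
    (σ * (deriv κ x)⁻¹) • deriv g x + (σ * (-(deriv (deriv κ) x) / (deriv κ x) ^ 2)) • g x
    with hvdef
  have hvd : ∀ x ∈ Icc (0:ℝ) T, HasDerivAt v (v' x) x := by
    intro x hx
    have h1 : HasDerivAt (fun y => σ * (deriv κ y)⁻¹)
        (σ * (-(deriv (deriv κ) x) / (deriv κ x) ^ 2)) x := by
      have := ((hκ'diff x).hasDerivAt.inv (hκne x hx)).const_mul σ
      exact this
    exact h1.smul (hgdiff x).hasDerivAt
  have hFd : ∀ x ∈ uIcc (0:ℝ) t,
      HasDerivAt (fun y => u y • v y)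
        (u x • v' x + (w x * (deriv κ x / σ)) • v x) x := by
    intro x hx
    exact (hu x).smul (hvd x (hsub (huIcc ▸ hx)))
  -- continuity pieces on Icc 0 t
  have hcont_inv : ContinuousOn (fun x => (deriv κ x)⁻¹) (Icc 0 t) :=
    (hκ'.continuous.continuousOn.inv₀ (fun x hx => hκne x (hsub hx)))
  have hcv : ContinuousOn v (Icc 0 t) :=
    ((continuousOn_const.mul hcont_inv).smul hgdiff.continuous.continuousOn)
  have hcv' : ContinuousOn v' (Icc 0 t) := by
    apply ContinuousOn.add
    · exact (continuousOn_const.mul hcont_inv).smul hg'cont.continuousOn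
    · refine ContinuousOn.smul ((continuousOn_const (c := σ)).mul ?_) hgdiff.continuous.continuousOn
      exact ContinuousOn.div hκ''cont.neg.continuousOn
        ((hκ'.continuous.pow 2).continuousOn)
        (fun x hx => pow_ne_zero 2 (hκne x (hsub hx)))
  have hcontu : Continuous u := by
    have : Differentiable ℝ u := fun x => (hu x).differentiableAt
    exact this.continuous
  have hint1 : IntervalIntegrable (fun x => u x • v' x) MeasureTheory.volume 0 t := by
    apply ContinuousOn.intervalIntegrable; rw [huIcc]
    exact hcontu.continuousOn.smul hcv'
  have hint2 : IntervalIntegrable (fun x => (w x * (deriv κ x / σ)) • v x)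
      MeasureTheory.volume 0 t := by
    apply ContinuousOn.intervalIntegrable; rw [huIcc]
    exact ((hw.continuousOn.mul ((hκ'.continuous.continuousOn).div_const σ)).smul hcv)
  -- integration by parts
  have hibp := integral_eq_sub_of_hasDerivAt hFd (hint1.add hint2)
  rw [intervalIntegral.integral_add hint1 hint2] at hibp
  -- the main integrand equals the second part
  have hcongr : ∫ s in (0:ℝ)..t, w s • g s
      = ∫ x in (0:ℝ)..t, (w x * (deriv κ x / σ)) • v x := by
    apply intervalIntegral.integral_congr
    intro x hx
    rw [huIcc] at hx
    have hne := hκne x (hsub hx)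
    simp only [hv, smul_smul]
    congr 1
    field_simp
  have key : ∫ s in (0:ℝ)..t, w s • g s
      = (u t • v t - u 0 • v 0) - ∫ x in (0:ℝ)..t, u x • v' x := by
    rw [hcongr, eq_sub_iff_add_eq, add_comm]
    exact hibp
  -- norm bounds
  have h0T : (0:ℝ) ∈ Icc (0:ℝ) T := ⟨le_rfl, hT.le⟩
  have hvb : ∀ x ∈ Icc (0:ℝ) T, ‖v x‖ ≤ σ * C₀ / c := by
    intro x hx
    have h5 : (deriv κ x)⁻¹ ≤ c⁻¹ := inv_anti₀ hc (hκ1 x hx)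
    have h6 : (0:ℝ) < (deriv κ x)⁻¹ := inv_pos.mpr (hκpos x hx)
    rw [hv, norm_smul, Real.norm_eq_abs, abs_of_pos (mul_pos hσ h6)]
    calc σ * (deriv κ x)⁻¹ * ‖g x‖ ≤ σ * c⁻¹ * C₀ := by
          apply mul_le_mul (by nlinarith) (hb3 x hx) (norm_nonneg _) (by positivity)
      _ = σ * C₀ / c := by ring
  have hv'b : ∀ x ∈ Icc (0:ℝ) T, ‖v' x‖ ≤ σ * (C₀ ^ 2 / c ^ 2 + C₀ / c) := by
    intro x hx
    have h5 : (deriv κ x)⁻¹ ≤ c⁻¹ := inv_anti₀ hc (hκ1 x hx)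
    have h6 : (0:ℝ) < (deriv κ x)⁻¹ := inv_pos.mpr (hκpos x hx)
    have h7 : ((deriv κ x) ^ 2)⁻¹ ≤ (c ^ 2)⁻¹ := by
      apply inv_anti₀ (by positivity)
      nlinarith [hκ1 x hx]
    have h8 : (0:ℝ) < ((deriv κ x) ^ 2)⁻¹ := inv_pos.mpr (pow_pos (hκpos x hx) 2)
    refine le_trans (norm_add_le _ _) ?_
    rw [norm_smul, norm_smul, Real.norm_eq_abs, Real.norm_eq_abs,
      abs_of_pos (mul_pos hσ h6)]
    have hA : σ * (deriv κ x)⁻¹ * ‖deriv g x‖ ≤ σ * (C₀ / c) := by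
      have := mul_le_mul (mul_le_mul_of_nonneg_left h5 hσ.le) (hb4 x hx)
        (norm_nonneg _) (by positivity)
      calc σ * (deriv κ x)⁻¹ * ‖deriv g x‖ ≤ σ * c⁻¹ * C₀ := this
        _ = σ * (C₀ / c) := by ring
    have hB : |σ * (-deriv (deriv κ) x / deriv κ x ^ 2)| * ‖g x‖ ≤ σ * (C₀ ^ 2 / c ^ 2) := by
      have habs : |σ * (-deriv (deriv κ) x / deriv κ x ^ 2)|
          = σ * (|deriv (deriv κ) x| * ((deriv κ x) ^ 2)⁻¹) := by
        rw [abs_mul, abs_of_pos hσ, abs_div, abs_neg, abs_of_pos (pow_pos (hκpos x hx) 2)]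
        ring
      rw [habs]
      have h9 : |deriv (deriv κ) x| * ((deriv κ x) ^ 2)⁻¹ ≤ C₀ * (c ^ 2)⁻¹ :=
        mul_le_mul (hb2 x hx) h7 h8.le hC₀.le
      calc σ * (|deriv (deriv κ) x| * ((deriv κ x) ^ 2)⁻¹) * ‖g x‖
          ≤ σ * (C₀ * (c ^ 2)⁻¹) * C₀ :=
            mul_le_mul (mul_le_mul_of_nonneg_left h9 hσ.le) (hb3 x hx) (norm_nonneg _)
              (by positivity)
        _ = σ * (C₀ ^ 2 / c ^ 2) := by ring
    linarith
  have hIb : ‖∫ x in (0:ℝ)..t, u x • v' x‖ ≤ σ * (C₀ ^ 2 / c ^ 2 + C₀ / c) * T := by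
    have hle : ‖∫ x in (0:ℝ)..t, u x • v' x‖ ≤ σ * (C₀ ^ 2 / c ^ 2 + C₀ / c) * |t - 0| := by
      apply intervalIntegral.norm_integral_le_of_norm_le_const
      intro x hx
      have hx' : x ∈ Icc (0:ℝ) T := hsub (Ioc_subset_Icc_self (by rwa [uIoc_of_le ht.1] at hx))
      rw [norm_smul, Real.norm_eq_abs]
      calc |u x| * ‖v' x‖ ≤ 1 * (σ * (C₀ ^ 2 / c ^ 2 + C₀ / c)) :=
            mul_le_mul (hub x) (hv'b x hx') (norm_nonneg _) zero_le_one
        _ = σ * (C₀ ^ 2 / c ^ 2 + C₀ / c) := one_mul _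
    have : |t - 0| ≤ T := by rw [sub_zero, abs_of_nonneg ht.1]; exact ht.2
    calc ‖∫ x in (0:ℝ)..t, u x • v' x‖ ≤ σ * (C₀ ^ 2 / c ^ 2 + C₀ / c) * |t - 0| := hle
      _ ≤ σ * (C₀ ^ 2 / c ^ 2 + C₀ / c) * T := by
          apply mul_le_mul_of_nonneg_left this (by positivity)
  have hbt : ∀ x ∈ Icc (0:ℝ) T, ‖u x • v x‖ ≤ σ * C₀ / c := by
    intro x hx
    rw [norm_smul, Real.norm_eq_abs]
    calc |u x| * ‖v x‖ ≤ 1 * (σ * C₀ / c) :=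
          mul_le_mul (hub x) (hvb x hx) (norm_nonneg _) zero_le_one
      _ = σ * C₀ / c := one_mul _
  rw [key]
  calc ‖(u t • v t - u 0 • v 0) - ∫ x in (0:ℝ)..t, u x • v' x‖
      ≤ ‖u t • v t - u 0 • v 0‖ + ‖∫ x in (0:ℝ)..t, u x • v' x‖ := norm_sub_le _ _
    _ ≤ (‖u t • v t‖ + ‖u 0 • v 0‖) + ‖∫ x in (0:ℝ)..t, u x • v' x‖ := by
        gcongr; exact norm_sub_le _ _
    _ ≤ (σ * C₀ / c + σ * C₀ / c) + σ * (C₀ ^ 2 / c ^ 2 + C₀ / c) * T := by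
        exact add_le_add (add_le_add (hbt t ht) (hbt 0 h0T)) hIb
    _ = (2 * C₀ / c + T * (C₀ ^ 2 / c ^ 2 + C₀ / c)) * σ := by ring


theorem oscillatory_integral_bound
    (T : ℝ) (hT : 0 < T)
    (n : ℕ) (hn : 1 ≤ n)
    (c C₀ : ℝ) (hc : 0 < c) (hC₀ : 0 < C₀) :
    -- the constant C depends only on c, C₀, T, n
    ∃ C > 0, ∀ κ : ℝ → ℝ,
      ContDiff ℝ 2 κ →
      (∀ t ∈ Icc (0:ℝ) T, c ≤ deriv κ t) →
      (∀ t ∈ Icc (0:ℝ) T, |deriv κ t| + |deriv (deriv κ) t| ≤ C₀) →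
      ∀ g : ℝ → EuclideanSpace ℝ (Fin n),
      ContDiff ℝ 1 g →
      (∀ t ∈ Icc (0:ℝ) T, ‖g t‖ + ‖deriv g t‖ ≤ C₀) →
      ∀ ε ∈ Ioc (0:ℝ) 1, ∀ t ∈ Icc (0:ℝ) T,
        ‖∫ s in (0:ℝ)..t, Real.sin ((κ t - κ s) / Real.sqrt ε) • g s‖
          ≤ C * Real.sqrt ε ∧
        ‖∫ s in (0:ℝ)..t, Real.cos ((κ t - κ s) / Real.sqrt ε) • g s‖
          ≤ C * Real.sqrt ε := by
  refine ⟨2 * C₀ / c + T * (C₀ ^ 2 / c ^ 2 + C₀ / c), by positivity, ?_⟩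
  intro κ hκ hκ1 hκ2 g hg hgb ε hε t ht
  set σ := Real.sqrt ε with hσdef
  have hσ : 0 < σ := Real.sqrt_pos.mpr hε.1
  have hκdiff : Differentiable ℝ κ := by
    have h2 : ContDiff ℝ ((1:ℕ) + 1) κ := by exact_mod_cast hκ
    exact (contDiff_succ_iff_deriv.mp h2).1
  have hφ : ∀ x : ℝ, HasDerivAt (fun y => (κ t - κ y) / σ) (-(deriv κ x) / σ) x := by
    intro x
    have := ((hκdiff x).hasDerivAt.const_sub (κ t)).div_const σ
    simpa using this
  have hκcont : Continuous κ := hκdiff.continuous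
  have hwc : Continuous fun s => (κ t - κ s) / σ :=
    (continuous_const.sub hκcont).div_const σ
  constructor
  · have hM := osc_aux T c C₀ hT hc hC₀ κ hκ hκ1 hκ2 g hg hgb σ hσ
      (fun s => Real.cos ((κ t - κ s) / σ)) (fun s => Real.sin ((κ t - κ s) / σ))
      (Real.continuous_sin.comp hwc)
      (fun x => by
        have := (hφ x).cos
        convert this using 1
        ring)
      (fun x => Real.abs_cos_le_one _) t ht
    calc ‖∫ s in (0:ℝ)..t, Real.sin ((κ t - κ s) / σ) • g s‖
        ≤ (2 * C₀ / c + T * (C₀ ^ 2 / c ^ 2 + C₀ / c)) * σ := hM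
      _ = (2 * C₀ / c + T * (C₀ ^ 2 / c ^ 2 + C₀ / c)) * Real.sqrt ε := rfl
  · have hM := osc_aux T c C₀ hT hc hC₀ κ hκ hκ1 hκ2 g hg hgb σ hσ
      (fun s => -Real.sin ((κ t - κ s) / σ)) (fun s => Real.cos ((κ t - κ s) / σ))
      (Real.continuous_cos.comp hwc)
      (fun x => by
        have : HasDerivAt (fun s => -Real.sin ((κ t - κ s) / σ))
            (-(Real.cos ((κ t - κ x) / σ) * (-deriv κ x / σ))) x := (hφ x).sin.neg
        convert this using 1
        ring)
      (fun x => by rw [abs_neg]; exact Real.abs_sin_le_one _) t ht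
    exact hM

end
end

section
/- Let ε ∈ (0,1], s ∈ [0,t_f], B > 0, and let γ_+, γ_− : [s,t_f] → ℂ be C¹ functions satisfying γ_+'(t) = (k'(t)/(2k(t)))·e^{−2i·κ(t)/ε^{1/2}}·γ_−(t) and γ_−'(t) = (k'(t)/(2k(t)))·e^{2i·κ(t)/ε^{1/2}}·γ_+(t), together with the bounds |γ_+(t)| ≤ B and |γ_−(t)| ≤ B for all t ∈ [s,t_f]. Then there exists C > 0 depending only on c, C₀, t_f (and not on ε, s, B) such that for all t ∈ [s,t_f]: |γ_+(t) − γ_+(s)| ≤ C·ε^{1/2}·B and |γ_−(t) − γ_−(s)| ≤ C·ε^{1/2}·B. -/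
/- Near-conservation of the WKB amplitudes γ₊, γ₋ driven by oscillatory coupling. -/

open Set

noncomputable section


lemma wkb_aux (tf c C₀ : ℝ) (htf : 0 < tf) (hc : 0 < c) (hC₀ : 0 < C₀)
    (k : ℝ → ℝ) (hk : ContDiff ℝ 2 k)
    (hkc : ∀ t ∈ Icc (0:ℝ) tf, c ≤ k t)
    (hkb : ∀ t ∈ Icc (0:ℝ) tf, |k t| + |deriv k t| + |deriv (deriv k) t| ≤ C₀)
    (e : ℝ) (he : 0 < e) (s : ℝ) (hs : s ∈ Icc (0:ℝ) tf)
    (B : ℝ) (hB : 0 < B) (σ : ℝ) (hσ : σ = 1 ∨ σ = -1)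
    (a b : ℝ → ℂ)
    (ha : ∀ t ∈ Icc s tf, HasDerivAt a
      ((↑(deriv k t / (2 * k t)) : ℂ)
        * Complex.exp ((↑(2 * σ * (∫ τ in (0:ℝ)..t, k τ) / e) : ℂ) * Complex.I)
        * b t) t)
    (hb : ∀ t ∈ Icc s tf, HasDerivAt b
      ((↑(deriv k t / (2 * k t)) : ℂ)
        * Complex.exp ((↑(2 * (-σ) * (∫ τ in (0:ℝ)..t, k τ) / e) : ℂ) * Complex.I)
        * a t) t)
    (hab : ∀ t ∈ Icc s tf, ‖a t‖ ≤ B ∧ ‖b t‖ ≤ B) :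
    ∀ t ∈ Icc s tf, ‖a t - a s‖ ≤
      ((3 * C₀ ^ 2 / (4 * c ^ 3) + C₀ ^ 2 / (8 * c ^ 3)) * tf + C₀ / (2 * c ^ 2)) * e * B := by
  have hσ1 : |σ| = 1 := by rcases hσ with h | h <;> simp [h]
  have hσ0 : σ ≠ 0 := by rcases hσ with h | h <;> simp [h]
  have he' : e ≠ 0 := ne_of_gt he
  -- notation
  set K : ℝ → ℝ := fun u => ∫ τ in (0:ℝ)..u, k τ with hKdef
  have hkcont : Continuous k := hk.continuous
  have hK : ∀ t : ℝ, HasDerivAt K (k t) t := fun t =>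
    intervalIntegral.integral_hasDerivAt_right (hkcont.intervalIntegrable 0 t)
      (hkcont.stronglyMeasurableAtFilter _ _) hkcont.continuousAt
  have hkd := contDiff_succ_iff_deriv.mp (show ContDiff ℝ (1 + 1) k from by exact_mod_cast hk)
  have hk1 : ∀ t : ℝ, HasDerivAt k (deriv k t) t := fun t => (hkd.1 t).hasDerivAt
  have hk2 : ∀ t : ℝ, HasDerivAt (deriv k) (deriv (deriv k) t) t := fun t =>
    ((hkd.2.2.differentiable one_ne_zero) t).hasDerivAt
  set φ : ℝ → ℂ := fun u => Complex.exp ((↑(2 * σ * K u / e) : ℂ) * Complex.I) with hφdef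
  set r : ℝ → ℝ := fun u => deriv k u / (k u) ^ 2 with hrdef
  set r' : ℝ → ℝ := fun u => (deriv (deriv k) u * k u - 2 * (deriv k u) ^ 2) / (k u) ^ 3
    with hr'def
  set g : ℝ → ℂ := fun u => (↑(e / (4 * σ)) : ℂ) * (-Complex.I) * (↑(r u) : ℂ) with hgdef
  set g' : ℝ → ℂ := fun u => (↑(e / (4 * σ)) : ℂ) * (-Complex.I) * (↑(r' u) : ℂ) with hg'def
  set b' : ℝ → ℂ := fun u => (↑(deriv k u / (2 * k u)) : ℂ)
    * Complex.exp ((↑(2 * (-σ) * K u / e) : ℂ) * Complex.I) * a u with hb'def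
  set ψ : ℝ → ℂ := fun u => a u - g u * φ u * b u with hψdef
  set ψd : ℝ → ℂ := fun u => -(g' u * φ u * b u) - g u * φ u * b' u with hψddef
  intro t ht
  have hsub : Icc s tf ⊆ Icc (0:ℝ) tf := Icc_subset_Icc hs.1 le_rfl
  -- pointwise bounds
  have hbd : ∀ u ∈ Icc s tf, c ≤ k u ∧ |k u| ≤ C₀ ∧ |deriv k u| ≤ C₀ ∧
      |deriv (deriv k) u| ≤ C₀ := by
    intro u hu
    have h0 := hkc u (hsub hu)
    have h1 := hkb u (hsub hu)
    have a1 := abs_nonneg (k u)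
    have a2 := abs_nonneg (deriv k u)
    have a3 := abs_nonneg (deriv (deriv k) u)
    exact ⟨h0, by linarith, by linarith, by linarith⟩
  have hφnorm : ∀ u : ℝ, ‖φ u‖ = 1 := fun u => Complex.norm_exp_ofReal_mul_I _
  have hgnorm : ∀ u ∈ Icc s tf, ‖g u‖ ≤ e * C₀ / (4 * c ^ 2) := by
    intro u hu
    obtain ⟨h0, h1, h2, h3⟩ := hbd u hu
    have hku : 0 < k u := lt_of_lt_of_le hc h0
    have : ‖g u‖ = e / 4 * |r u| := by
      simp [hgdef, Complex.norm_real, Real.norm_eq_abs, abs_div, abs_mul, hσ1,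
        abs_of_pos he]
    rw [this, hrdef]
    have hr : |deriv k u / k u ^ 2| ≤ C₀ / c ^ 2 := by
      rw [abs_div, abs_pow, sq_abs]
      exact div_le_div₀ (le_of_lt hC₀) h2 (by positivity) (by nlinarith)
    calc e / 4 * |deriv k u / k u ^ 2| ≤ e / 4 * (C₀ / c ^ 2) := by
          apply mul_le_mul_of_nonneg_left hr (by positivity)
      _ = e * C₀ / (4 * c ^ 2) := by ring
  have hg'norm : ∀ u ∈ Icc s tf, ‖g' u‖ ≤ e * (3 * C₀ ^ 2) / (4 * c ^ 3) := by
    intro u hu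
    obtain ⟨h0, h1, h2, h3⟩ := hbd u hu
    have hku : 0 < k u := lt_of_lt_of_le hc h0
    have : ‖g' u‖ = e / 4 * |r' u| := by
      simp [hg'def, Complex.norm_real, Real.norm_eq_abs, abs_div, abs_mul, hσ1,
        abs_of_pos he]
    rw [this, hr'def]
    have hnum : |deriv (deriv k) u * k u - 2 * (deriv k u) ^ 2| ≤ 3 * C₀ ^ 2 := by
      have e1 : |deriv (deriv k) u * k u| ≤ C₀ * C₀ := by
        rw [abs_mul]; exact mul_le_mul h3 h1 (abs_nonneg _) (le_of_lt hC₀)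
      have e2 : |2 * (deriv k u) ^ 2| ≤ 2 * C₀ ^ 2 := by
        rw [abs_of_nonneg (by positivity)]
        nlinarith [sq_abs (deriv k u), abs_nonneg (deriv k u)]
      calc |deriv (deriv k) u * k u - 2 * (deriv k u) ^ 2|
          ≤ |deriv (deriv k) u * k u| + |2 * (deriv k u) ^ 2| := abs_sub _ _
        _ ≤ C₀ * C₀ + 2 * C₀ ^ 2 := by linarith
        _ = 3 * C₀ ^ 2 := by ring
    have hr : |(deriv (deriv k) u * k u - 2 * (deriv k u) ^ 2) / k u ^ 3| ≤
        3 * C₀ ^ 2 / c ^ 3 := by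
      rw [abs_div]
      refine div_le_div₀ (by positivity) hnum (by positivity) ?_
      rw [abs_pow, abs_of_pos hku]
      exact pow_le_pow_left₀ (le_of_lt hc) h0 3
    calc e / 4 * |(deriv (deriv k) u * k u - 2 * (deriv k u) ^ 2) / k u ^ 3|
        ≤ e / 4 * (3 * C₀ ^ 2 / c ^ 3) := mul_le_mul_of_nonneg_left hr (by positivity)
      _ = e * (3 * C₀ ^ 2) / (4 * c ^ 3) := by ring
  have hb'norm : ∀ u ∈ Icc s tf, ‖b' u‖ ≤ C₀ / (2 * c) * B := by
    intro u hu
    obtain ⟨h0, h1, h2, h3⟩ := hbd u hu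
    have hku : 0 < k u := lt_of_lt_of_le hc h0
    have hexp : ‖Complex.exp ((↑(2 * (-σ) * K u / e) : ℂ) * Complex.I)‖ = 1 :=
      Complex.norm_exp_ofReal_mul_I _
    have hn : ‖b' u‖ = |deriv k u / (2 * k u)| * ‖a u‖ := by
      rw [hb'def]
      simp only
      rw [norm_mul, norm_mul, hexp, mul_one, Complex.norm_real, Real.norm_eq_abs]
    rw [hn]
    have hf : |deriv k u / (2 * k u)| ≤ C₀ / (2 * c) := by
      rw [abs_div]
      refine div_le_div₀ (le_of_lt hC₀) h2 (by positivity) ?_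
      rw [abs_mul, abs_two, abs_of_pos hku]; nlinarith
    exact mul_le_mul hf (hab u hu).1 (norm_nonneg _) (by positivity)
  -- derivative of ψ
  have hψderiv : ∀ u ∈ Icc s tf, HasDerivAt ψ (ψd u) u := by
    intro u hu
    obtain ⟨h0, h1, h2, h3⟩ := hbd u hu
    have hku : 0 < k u := lt_of_lt_of_le hc h0
    have hku0 : k u ≠ 0 := ne_of_gt hku
    have hr : HasDerivAt r (r' u) u := by
      have hden : HasDerivAt (fun x => (k x) ^ 2) (2 * k u ^ 1 * deriv k u) u :=
        (hk1 u).pow 2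
      have := (hk2 u).div hden (by positivity)
      refine this.congr_deriv (Eq.symm ?_)
      rw [hr'def]
      field_simp
    have hg : HasDerivAt g (g' u) u := (hr.ofReal_comp).const_mul _
    have hp : HasDerivAt (fun x => 2 * σ * K x / e) (2 * σ * k u / e) u :=
      ((hK u).const_mul (2 * σ)).div_const e
    have hφ : HasDerivAt φ ((↑(2 * σ * k u / e) : ℂ) * Complex.I * φ u) u := by
      have := ((hp.ofReal_comp).mul_const Complex.I).cexp
      convert this using 1
      ring
    have hprod : HasDerivAt (fun x => g x * φ x * b x)
        ((g' u * φ u + g u * ((↑(2 * σ * k u / e) : ℂ) * Complex.I * φ u)) * b u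
          + g u * φ u * b' u) u := ((hg.mul hφ).mul (hb u hu))
    have hsum := (ha u hu).sub hprod
    have key : (↑(deriv k u / (2 * k u)) : ℂ)
        = g u * ((↑(2 * σ * k u / e) : ℂ) * Complex.I) := by
      rw [hgdef, hrdef]
      simp only
      push_cast
      have hkuC : (k u : ℂ) ≠ 0 := by exact_mod_cast hku0
      have heC : (e : ℂ) ≠ 0 := by exact_mod_cast he'
      have hσC : (σ : ℂ) ≠ 0 := by exact_mod_cast hσ0
      field_simp
      linear_combination (4 * ((deriv k u : ℝ) : ℂ))
        * Complex.I_sq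
    refine hsum.congr_deriv (Eq.symm ?_)
    rw [hψddef, hφdef]
    simp only
    linear_combination (-(Complex.exp ((↑(2 * σ * K u / e) : ℂ) * Complex.I) * b u)) * key
  -- bound on ψd
  set M : ℝ := e * (3 * C₀ ^ 2) / (4 * c ^ 3) * B + e * C₀ / (4 * c ^ 2) * (C₀ / (2 * c) * B)
    with hMdef
  have hψdnorm : ∀ u ∈ Ico s tf, ‖ψd u‖ ≤ M := by
    intro u hu
    have hu' : u ∈ Icc s tf := Ico_subset_Icc_self hu
    have n1 : ‖g' u * φ u * b u‖ ≤ e * (3 * C₀ ^ 2) / (4 * c ^ 3) * B := by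
      rw [norm_mul, norm_mul, hφnorm, mul_one]
      exact mul_le_mul (hg'norm u hu') (hab u hu').2 (norm_nonneg _) (by positivity)
    have n2 : ‖g u * φ u * b' u‖ ≤ e * C₀ / (4 * c ^ 2) * (C₀ / (2 * c) * B) := by
      rw [norm_mul, norm_mul, hφnorm, mul_one]
      exact mul_le_mul (hgnorm u hu') (hb'norm u hu') (norm_nonneg _) (by positivity)
    have htri : ‖ψd u‖ ≤ ‖g' u * φ u * b u‖ + ‖g u * φ u * b' u‖ := by
      rw [hψddef]
      simp only
      calc ‖-(g' u * φ u * b u) - g u * φ u * b' u‖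
          ≤ ‖-(g' u * φ u * b u)‖ + ‖g u * φ u * b' u‖ := norm_sub_le _ _
        _ = ‖g' u * φ u * b u‖ + ‖g u * φ u * b' u‖ := by rw [norm_neg]
    rw [hMdef]; linarith
  have hmain := norm_image_sub_le_of_norm_deriv_le_segment'
    (fun u hu => (hψderiv u hu).hasDerivWithinAt) hψdnorm t ht
  -- assemble
  have hats : a t - a s = (ψ t - ψ s) + g t * φ t * b t - g s * φ s * b s := by
    rw [hψdef]; ring
  have hgb : ∀ u ∈ Icc s tf, ‖g u * φ u * b u‖ ≤ e * C₀ / (4 * c ^ 2) * B := by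
    intro u hu
    rw [norm_mul, norm_mul, hφnorm, mul_one]
    exact mul_le_mul (hgnorm u hu) (hab u hu).2 (norm_nonneg _) (by positivity)
  have hses : s ∈ Icc s tf := ⟨le_rfl, hs.2⟩
  have h1 : ‖a t - a s‖ ≤ ‖ψ t - ψ s‖ + ‖g t * φ t * b t‖ + ‖g s * φ s * b s‖ := by
    rw [hats]
    calc ‖ψ t - ψ s + g t * φ t * b t - g s * φ s * b s‖
        ≤ ‖ψ t - ψ s + g t * φ t * b t‖ + ‖g s * φ s * b s‖ := norm_sub_le _ _
      _ ≤ ‖ψ t - ψ s‖ + ‖g t * φ t * b t‖ + ‖g s * φ s * b s‖ := by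
          have := norm_add_le (ψ t - ψ s) (g t * φ t * b t); linarith
  have hM0 : 0 ≤ M := by rw [hMdef]; positivity
  have hts : t - s ≤ tf := by
    have := ht.2; have := hs.1; linarith
  have h2 : ‖ψ t - ψ s‖ ≤ M * tf :=
    le_trans hmain (mul_le_mul_of_nonneg_left hts hM0)
  have hfinal : ((3 * C₀ ^ 2 / (4 * c ^ 3) + C₀ ^ 2 / (8 * c ^ 3)) * tf + C₀ / (2 * c ^ 2))
      * e * B = M * tf + 2 * (e * C₀ / (4 * c ^ 2) * B) := by
    rw [hMdef]; ring
  rw [hfinal]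
  have hx := hgb t ht
  have hy := hgb s hses
  calc ‖a t - a s‖ ≤ ‖ψ t - ψ s‖ + ‖g t * φ t * b t‖ + ‖g s * φ s * b s‖ := h1
    _ ≤ M * tf + e * C₀ / (4 * c ^ 2) * B + e * C₀ / (4 * c ^ 2) * B :=
        add_le_add (add_le_add h2 hx) hy
    _ = M * tf + 2 * (e * C₀ / (4 * c ^ 2) * B) := by ring

theorem wkb_amplitudes_near_conservation
    (tf : ℝ) (htf : 0 < tf)
    (c C₀ : ℝ) (hc : 0 < c) (hC₀ : 0 < C₀) :
    -- the constant C depends only on c, C₀, t_f (and not on ε, s, B)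
    ∃ C > 0, ∀ k : ℝ → ℝ,
      ContDiff ℝ 2 k →
      (∀ t ∈ Icc (0:ℝ) tf, c ≤ k t) →
      (∀ t ∈ Icc (0:ℝ) tf,
        |k t| + |deriv k t| + |deriv (deriv k) t| ≤ C₀) →
      ∀ ε ∈ Ioc (0:ℝ) 1, ∀ s ∈ Icc (0:ℝ) tf, ∀ B : ℝ, 0 < B →
      ∀ γp γm : ℝ → ℂ,
      (∀ t ∈ Icc s tf, HasDerivAt γp
        ((↑(deriv k t / (2 * k t)) : ℂ)
          * Complex.exp (-(2 * Complex.I * ↑(∫ τ in (0:ℝ)..t, k τ))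
              / (↑(Real.sqrt ε) : ℂ))
          * γm t) t) →
      (∀ t ∈ Icc s tf, HasDerivAt γm
        ((↑(deriv k t / (2 * k t)) : ℂ)
          * Complex.exp ((2 * Complex.I * ↑(∫ τ in (0:ℝ)..t, k τ))
              / (↑(Real.sqrt ε) : ℂ))
          * γp t) t) →
      (∀ t ∈ Icc s tf, ‖γp t‖ ≤ B ∧ ‖γm t‖ ≤ B) →
      ∀ t ∈ Icc s tf,
        ‖γp t - γp s‖ ≤ C * Real.sqrt ε * B ∧
        ‖γm t - γm s‖ ≤ C * Real.sqrt ε * B := by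
  refine ⟨(3 * C₀ ^ 2 / (4 * c ^ 3) + C₀ ^ 2 / (8 * c ^ 3)) * tf + C₀ / (2 * c ^ 2),
    by positivity, ?_⟩
  intro k hk hkc hkb ε hε s hs B hB γp γm hγp hγm hbd t ht
  set e : ℝ := Real.sqrt ε with hedef
  have he : 0 < e := Real.sqrt_pos.mpr hε.1
  have heC : ((e : ℝ) : ℂ) ≠ 0 := Complex.ofReal_ne_zero.mpr (ne_of_gt he)
  constructor
  · refine wkb_aux tf c C₀ htf hc hC₀ k hk hkc hkb e he s hs B hB (-1) (Or.inr rfl)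
      γp γm ?_ ?_ hbd t ht
    · intro u hu
      have h := hγp u hu
      have harg : (↑(2 * (-1:ℝ) * (∫ τ in (0:ℝ)..u, k τ) / e) : ℂ) * Complex.I
          = -(2 * Complex.I * ↑(∫ τ in (0:ℝ)..u, k τ)) / ((e : ℝ) : ℂ) := by
        push_cast
        field_simp
        try ring
        try simp
      rw [harg]
      exact h
    · intro u hu
      have h := hγm u hu
      have harg : (↑(2 * (-(-1:ℝ)) * (∫ τ in (0:ℝ)..u, k τ) / e) : ℂ) * Complex.I
          = (2 * Complex.I * ↑(∫ τ in (0:ℝ)..u, k τ)) / ((e : ℝ) : ℂ) := by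
        push_cast
        field_simp
        try ring
        try simp
      rw [harg]
      exact h
  · refine wkb_aux tf c C₀ htf hc hC₀ k hk hkc hkb e he s hs B hB 1 (Or.inl rfl)
      γm γp ?_ ?_ (fun u hu => ⟨(hbd u hu).2, (hbd u hu).1⟩) t ht
    · intro u hu
      have h := hγm u hu
      have harg : (↑(2 * (1:ℝ) * (∫ τ in (0:ℝ)..u, k τ) / e) : ℂ) * Complex.I
          = (2 * Complex.I * ↑(∫ τ in (0:ℝ)..u, k τ)) / ((e : ℝ) : ℂ) := by
        push_cast
        field_simp
        try ring
        try simp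
      rw [harg]
      exact h
    · intro u hu
      have h := hγp u hu
      have harg : (↑(2 * (-(1:ℝ)) * (∫ τ in (0:ℝ)..u, k τ) / e) : ℂ) * Complex.I
          = -(2 * Complex.I * ↑(∫ τ in (0:ℝ)..u, k τ)) / ((e : ℝ) : ℂ) := by
        push_cast
        field_simp
        try ring
        try simp
      rw [harg]
      exact h

end
end
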